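/- arXiv:1502.00969 — 10 statements merged into one kernel-verified Lean document; each statement's English description precedes it below -/
import Mathlib

section
/- Let p be a prime and M a positive integer. Let φ : ℤ/ℓℤ → ℕ_{>0} be a map such that p·φ(i) − φ(i+1) ≤ M for all i ∈ ℤ/ℓℤ. Then φ(i) ≤ M/(p−1) for every i ∈ ℤ/ℓℤ. -/
/-- Lemma `max1`: a support map whose jumps `p·φ(i) − φ(i+1)` are all at most `M`
takes values at most `M/(p−1)`. -/
theorem stmt_0 (p : ℕ) (hp : p.Prime) (M : ℕ) (hM : 0 < M)
    (ℓ : ℕ) (hℓ : 0 < ℓ) (φ : ZMod ℓ → ℕ) (hpos : ∀ i, 0 < φ i)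
    (hjump : ∀ i : ZMod ℓ, p * φ i ≤ φ (i + 1) + M) :
    ∀ i : ZMod ℓ, (p - 1) * φ i ≤ M := by
  haveI : NeZero ℓ := ⟨hℓ.ne'⟩
  obtain ⟨j, hj⟩ := Finite.exists_max φ
  have h2 : 2 ≤ p := hp.two_le
  have key : (p - 1) * φ j ≤ M := by
    have := hjump j
    have h1 : φ (j + 1) ≤ φ j := hj _
    have : p * φ j ≤ φ j + M := this.trans (by omega)
    have hp1 : (p - 1) * φ j = p * φ j - φ j := Nat.sub_one_mul p (φ j)
    have hge : φ j ≤ p * φ j := Nat.le_mul_of_pos_left _ (by omega)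
    omega
  intro i
  calc (p - 1) * φ i ≤ (p - 1) * φ j := Nat.mul_le_mul_left _ (hj i)
    _ ≤ M := key
end

section
/- Let p be a prime, s ≥ 1, and let (c_i)_{i≥1} be the increasing enumeration of the set F_s = { p^j · b : b ∈ E_s, j ≥ 0 }, where E_s is the set of the s smallest positive integers coprime to p. Then c_i = i for all 1 ≤ i ≤ s + ⌈s/(p−1)⌉ − 1, and c_i = p · c_{i−s} for all i ≥ s + ⌈s/(p−1)⌉. -/
/-- Lemma `min2`: let `(c_i)` be the increasing enumeration (0-indexed via `Nat.nth`)
of `F_s = { p^j · b : b ∈ E_s, j ≥ 0 }`, where `E_s` is the set of the `s` smallest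
positive integers coprime to `p`, i.e. the positive integers coprime to `p` that are
at most `s + ⌈s/(p−1)⌉ − 1`. Then `c_i = i` for `1 ≤ i ≤ s + ⌈s/(p−1)⌉ − 1`, and
`c_i = p · c_{i−s}` for `i ≥ s + ⌈s/(p−1)⌉`. -/
theorem stmt_4 (p s : ℕ) (hp : p.Prime) (hs : 1 ≤ s)
    (F : ℕ → Prop)
    (hF : ∀ m, F m ↔ ∃ j b, 0 < b ∧ Nat.Coprime b p ∧
      b ≤ s + ⌈(s : ℚ) / (p - 1)⌉₊ - 1 ∧ m = p ^ j * b) :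
    (∀ i, 1 ≤ i → i ≤ s + ⌈(s : ℚ) / (p - 1)⌉₊ - 1 → Nat.nth F (i - 1) = i) ∧
    (∀ i, s + ⌈(s : ℚ) / (p - 1)⌉₊ ≤ i →
      Nat.nth F (i - 1) = p * Nat.nth F (i - 1 - s)) := by
  classical
  set q := ⌈(s : ℚ) / (p - 1)⌉₊ with hq
  set t := s + q - 1 with ht
  have hp2 := hp.two_le
  have hpQ : (0:ℚ) < (p:ℚ) - 1 := by
    have : (2:ℚ) ≤ p := by exact_mod_cast hp2
    linarith
  have hq1 : 1 ≤ q := by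
    rw [hq, Nat.one_le_ceil_iff]
    positivity
  -- s ≤ (p-1) * q
  have hsq : s ≤ (p - 1) * q := by
    have h1 : (s:ℚ) / ((p:ℚ) - 1) ≤ q := Nat.le_ceil _
    have h2 : (s:ℚ) ≤ (q:ℚ) * ((p:ℚ) - 1) := (div_le_iff₀ hpQ).mp h1
    have h3 : (s:ℚ) ≤ (((p - 1) * q : ℕ) : ℚ) := by
      push_cast [Nat.cast_sub (by omega : 1 ≤ p)]
      linarith
    exact_mod_cast h3
  -- (p-1)*(q-1) < s
  have hsq' : (p - 1) * (q - 1) < s := by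
    have h0 : (q - 1 : ℕ) < ⌈(s : ℚ) / (p - 1)⌉₊ := by rw [← hq]; omega
    have h1 : ((q - 1 : ℕ) : ℚ) < (s:ℚ) / ((p:ℚ) - 1) := Nat.lt_ceil.mp h0
    have h2 : ((q - 1 : ℕ):ℚ) * ((p:ℚ) - 1) < s := (lt_div_iff₀ hpQ).mp h1
    have h3 : (((p - 1) * (q - 1) : ℕ) : ℚ) < (s:ℚ) := by
      push_cast [Nat.cast_sub (by omega : 1 ≤ p)]
      linarith
    exact_mod_cast h3
  have hp1 : p - 1 + 1 = p := by omega
  have hA : p * (q - 1) ≤ t := by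
    have h : p * (q - 1) = (p - 1) * (q - 1) + (q - 1) := by
      conv_lhs => rw [← hp1]
      ring
    omega
  have hB : t < p * q := by
    have h : p * q = (p - 1) * q + q := by
      conv_lhs => rw [← hp1]
      ring
    omega
  -- basic membership facts
  have hF0 : ¬ F 0 := by
    rw [hF]
    rintro ⟨j, b, hb, -, -, h⟩
    have := pow_pos (by omega : 0 < p) j
    nlinarith [pow_pos (by omega : 0 < p) j]
  have hFpos : ∀ m, F m → 0 < m := by
    intro m hm
    rcases Nat.eq_zero_or_pos m with h | h
    · exact absurd (h ▸ hm) hF0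
    · exact h
  have hFmem : ∀ i, 1 ≤ i → i ≤ t → F i := by
    intro i h1 h2
    rw [hF]
    refine ⟨i.factorization p, i / p ^ i.factorization p, Nat.ordCompl_pos p (by omega), ?_, ?_, ?_⟩
    · exact (Nat.coprime_ordCompl hp (by omega)).symm
    · exact le_trans (Nat.div_le_self _ _) h2
    · exact (Nat.ordProj_mul_ordCompl_eq_self i p).symm
  have hFmul : ∀ m, F m → F (p * m) := by
    intro m hm
    rw [hF] at hm ⊢
    obtain ⟨j, b, h1, h2, h3, h4⟩ := hm
    exact ⟨j + 1, b, h1, h2, h3, by rw [h4]; ring⟩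
  have hFdiv : ∀ m, F m → t < m → p ∣ m ∧ F (m / p) := by
    intro m hm hmt
    rw [hF] at hm
    obtain ⟨j, b, h1, h2, h3, h4⟩ := hm
    cases j with
    | zero => simp at h4; omega
    | succ j' =>
      have hd : m = p * (p ^ j' * b) := by rw [h4]; ring
      constructor
      · exact ⟨p ^ j' * b, hd⟩
      · rw [hd, Nat.mul_div_cancel_left _ (by omega : 0 < p), hF]
        exact ⟨j', b, h1, h2, h3, rfl⟩
  have hInf : (setOf F).Infinite := by
    apply Set.infinite_of_injective_forall_mem (f := fun j : ℕ => p ^ j)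
      (Nat.pow_right_injective hp2)
    intro j
    show F (p ^ j)
    rw [hF]
    exact ⟨j, 1, one_pos, Nat.coprime_one_left p, by omega, by ring⟩
  -- count F i = i - 1 for i ≤ t + 1
  have hcount : ∀ i, i ≤ t + 1 → Nat.count F i = i - 1 := by
    intro i hi
    induction i with
    | zero => simp
    | succ n ih =>
      rw [Nat.count_succ]
      rcases Nat.eq_zero_or_pos n with h | h
      · subst h; simp [hF0]
      · rw [if_pos (hFmem n h (by omega)), ih (by omega)]; omega
  -- the key counting lemma
  have hL : ∀ x, q ≤ x → Nat.count F (p * x) = Nat.count F x + s := by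
    intro x hx
    have hpx : t + 1 ≤ p * x := by
      calc t + 1 ≤ p * q := hB
      _ ≤ p * x := Nat.mul_le_mul_left p hx
    rw [Nat.count_eq_card_filter_range, Nat.count_eq_card_filter_range]
    have hsplit : Finset.range (p * x) = Finset.range (t + 1) ∪ Finset.Ico (t + 1) (p * x) := by
      rw [Finset.range_eq_Ico, Finset.range_eq_Ico, Finset.Ico_union_Ico_eq_Ico (by omega) hpx]
    have hdisj : Disjoint ((Finset.range (t + 1)).filter F)
        ((Finset.Ico (t + 1) (p * x)).filter F) := by
      apply Finset.disjoint_filter_filter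
      rw [Finset.range_eq_Ico]
      exact Finset.Ico_disjoint_Ico_consecutive 0 (t + 1) (p * x)
    rw [hsplit, Finset.filter_union, Finset.card_union_of_disjoint hdisj]
    have h1 : (Finset.range (t + 1)).filter F = Finset.Icc 1 t := by
      ext m
      simp only [Finset.mem_filter, Finset.mem_range, Finset.mem_Icc]
      constructor
      · rintro ⟨hm, hFm⟩
        exact ⟨hFpos m hFm, by omega⟩
      · rintro ⟨hm1, hm2⟩
        exact ⟨by omega, hFmem m hm1 hm2⟩
    have himg : (Finset.Ico (t + 1) (p * x)).filter F
        = ((Finset.Ico q x).filter F).image (p * ·) := by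
      ext m
      simp only [Finset.mem_filter, Finset.mem_Ico, Finset.mem_image]
      constructor
      · rintro ⟨⟨hm1, hm2⟩, hFm⟩
        obtain ⟨⟨d, hd⟩, hFd⟩ := hFdiv m hFm (by omega)
        have hdq : q ≤ d := by
          by_contra h
          have : p * d ≤ p * (q - 1) := Nat.mul_le_mul_left p (by omega)
          omega
        have hdx : d < x := by
          have : p * d < p * x := by omega
          exact Nat.lt_of_mul_lt_mul_left this
        have hmd : m / p = d := by rw [hd, Nat.mul_div_cancel_left _ (by omega : 0 < p)]
        exact ⟨d, ⟨⟨hdq, hdx⟩, hmd ▸ hFd⟩, hd.symm⟩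
      · rintro ⟨y, ⟨⟨hy1, hy2⟩, hFy⟩, rfl⟩
        refine ⟨⟨?_, ?_⟩, hFmul y hFy⟩
        · calc t + 1 ≤ p * q := hB
          _ ≤ p * y := Nat.mul_le_mul_left p hy1
        · have h1 : p * (y + 1) ≤ p * x := Nat.mul_le_mul_left p hy2
          have h2 : p * (y + 1) = p * y + p := by ring
          omega
    rw [h1, himg, Finset.card_image_of_injective _
      (fun a b h => Nat.eq_of_mul_eq_mul_left (by omega) h)]
    have hsplit2 : Finset.range x = Finset.range q ∪ Finset.Ico q x := by
      rw [Finset.range_eq_Ico, Finset.range_eq_Ico, Finset.Ico_union_Ico_eq_Ico (by omega) hx]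
    have hdisj2 : Disjoint ((Finset.range q).filter F) ((Finset.Ico q x).filter F) := by
      apply Finset.disjoint_filter_filter
      rw [Finset.range_eq_Ico]
      exact Finset.Ico_disjoint_Ico_consecutive 0 q x
    rw [hsplit2, Finset.filter_union, Finset.card_union_of_disjoint hdisj2]
    have hcq : ((Finset.range q).filter F).card = q - 1 := by
      rw [← Nat.count_eq_card_filter_range]
      exact hcount q (by omega)
    rw [hcq, Nat.card_Icc]
    omega
  -- part 1
  have part1 : ∀ i, 1 ≤ i → i ≤ t → Nat.nth F (i - 1) = i := by
    intro i h1 h2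
    have := Nat.nth_count (p := F) (hFmem i h1 h2)
    rwa [hcount i (by omega)] at this
  refine ⟨part1, ?_⟩
  intro i hi
  have hit : t + 1 ≤ i := by omega
  set k := i - 1 with hk
  have hks : i - 1 - s = k - s := rfl
  set c := Nat.nth F (k - s) with hc
  have hFc : F c := Nat.nth_mem_of_infinite hInf _
  have hcc : Nat.count F c = k - s := Nat.count_nth_of_infinite hInf _
  have hcq' : q ≤ c := by
    have h1 : Nat.nth F (q - 1) = q := part1 q hq1 (by omega)
    have h2 : Nat.nth F (q - 1) ≤ Nat.nth F (k - s) :=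
      (Nat.nth_strictMono hInf).monotone (by omega)
    omega
  have hkey : Nat.count F (p * c) = k := by
    rw [hL c hcq', hcc]
    omega
  have := Nat.nth_count (p := F) (hFmul c hFc)
  rw [hkey] at this
  exact this
end

section
/- With notation as in the previous statement, for any n ≥ 1, write n = q·s + r with 1 ≤ r ≤ s (so r ∈ {1,…,s}, q ≥ 0). Then c_n ≥ p^q · r. -/
/-- Lemma `min3`: with `(c_i)` the increasing enumeration of
`F_s = { p^j · b : b ∈ E_s, j ≥ 0 }` (`E_s` the `s` smallest positive integers
coprime to `p`), if `n = q·s + r` with `1 ≤ r ≤ s`, then `c_n ≥ p^q · r`. -/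
theorem stmt_5 (p s : ℕ) (hp : p.Prime) (hs : 1 ≤ s)
    (F : ℕ → Prop)
    (hF : ∀ m, F m ↔ ∃ j b, 0 < b ∧ Nat.Coprime b p ∧
      b ≤ s + ⌈(s : ℚ) / (p - 1)⌉₊ - 1 ∧ m = p ^ j * b)
    (n q r : ℕ) (hn : n = q * s + r) (hr1 : 1 ≤ r) (hrs : r ≤ s) :
    p ^ q * r ≤ Nat.nth F (n - 1) := by
  classical
  have hp2 : 2 ≤ p := hp.two_le
  set k := ⌈(s : ℚ) / (p - 1)⌉₊ with hkdef
  have hk1 : 1 ≤ k := by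
    rw [hkdef, Nat.one_le_ceil_iff]
    apply div_pos (by exact_mod_cast hs)
    have : (2 : ℚ) ≤ (p : ℚ) := by exact_mod_cast hp2
    linarith
  set B := s + k - 1 with hBdef
  have hBs : s ≤ B := by omega
  have hmemB : ∀ j b, 0 < b → Nat.Coprime b p → b ≤ B → F (p ^ j * b) := by
    intro j b h1 h2 h3
    exact (hF _).2 ⟨j, b, h1, h2, h3, rfl⟩
  have hpow : ∀ j, F (p ^ j) := by
    intro j
    simpa using hmemB j 1 one_pos (Nat.coprime_one_left _) (le_trans hs hBs)
  have hinf : (setOf F).Infinite := by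
    exact Set.infinite_of_injective_forall_mem
      (f := fun j : ℕ => p ^ j) (Nat.pow_right_injective hp2) hpow
  -- computing the p-free part
  have hoc : ∀ j b, ¬ p ∣ b → 0 < b → (p ^ j * b) / p ^ ((p ^ j * b).factorization p) = b := by
    intro j b hnd hb
    have hfac : (p ^ j * b).factorization p = j := by
      rw [Nat.factorization_mul (pow_ne_zero j (by omega)) (by omega)]
      simp [hp.factorization_pow, Nat.factorization_eq_zero_of_not_dvd hnd]
    rw [hfac, Nat.mul_div_cancel_left b (pow_pos (by omega : 0 < p) j)]
  -- number of coprimes up to B is at most s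
  have hcop : ((Finset.Ioc 0 B).filter (fun b => ¬ p ∣ b)).card ≤ s := by
    have hsplit := Finset.card_filter_add_card_filter_not
      (s := Finset.Ioc 0 B) (p := fun b => p ∣ b)
    have hdvd : ((Finset.Ioc 0 B).filter (fun b => p ∣ b)).card = B / p :=
      Nat.Ioc_filter_dvd_card_eq_div B p
    have hcard : (Finset.Ioc 0 B).card = B := by simp
    have hkk : (k - 1) * (p - 1) ≤ s := by
      have h1 : ((k : ℚ) - 1) < (s : ℚ) / ((p : ℚ) - 1) := by
        have h := Nat.lt_ceil.mp (show k - 1 < k by omega)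
        calc ((k : ℚ) - 1) = ((k - 1 : ℕ) : ℚ) := by
              push_cast [Nat.cast_sub hk1]; ring
          _ < (s : ℚ) / ((p : ℚ) - 1) := h
      have hpq : (0 : ℚ) < (p : ℚ) - 1 := by
        have : (2 : ℚ) ≤ (p : ℚ) := by exact_mod_cast hp2
        linarith
      have h2 : ((k : ℚ) - 1) * ((p : ℚ) - 1) < s := by
        rw [← lt_div_iff₀ hpq]; exact h1
      have h3 : (((k - 1) * (p - 1) : ℕ) : ℚ) < (s : ℚ) := by
        push_cast [Nat.cast_sub hk1, Nat.cast_sub (by omega : 1 ≤ p)]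
        exact h2
      exact_mod_cast h3.le
    have hdiv : k - 1 ≤ B / p := by
      rw [Nat.le_div_iff_mul_le (by omega : 0 < p)]
      have heq : (k - 1) * p = (k - 1) * (p - 1) + (k - 1) := by
        obtain ⟨t, ht⟩ := Nat.exists_eq_add_of_le (by omega : 1 ≤ p)
        subst ht; simp [Nat.mul_add, Nat.add_comm]
      omega
    omega
  -- key step: multiplying the bound by p adds at most s elements
  have hstep : ∀ X : ℕ, 0 < X → Nat.count F (p * X) ≤ Nat.count F X + s := by
    intro X hX
    have hsplit : Nat.count F (p * X) =
        Nat.count F X + ((Finset.Ico X (p * X)).filter F).card := by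
      rw [Nat.count_eq_card_filter_range, Nat.count_eq_card_filter_range,
        Finset.range_eq_Ico,
        ← Finset.Ico_union_Ico_eq_Ico (Nat.zero_le X)
          (Nat.le_mul_of_pos_left X (by omega)),
        Finset.filter_union, Finset.card_union_of_disjoint]
      · rw [Finset.range_eq_Ico]
      exact Finset.disjoint_filter_filter
        (Finset.Ico_disjoint_Ico_consecutive 0 X (p * X))
    rw [hsplit]
    have hinj : ((Finset.Ico X (p * X)).filter F).card ≤
        ((Finset.Ioc 0 B).filter (fun b => ¬ p ∣ b)).card := by
      apply Finset.card_le_card_of_injOn (fun m => m / p ^ (m.factorization p))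
      · intro m hm
        simp only [Finset.mem_coe, Finset.mem_filter, Finset.mem_Ico] at hm
        obtain ⟨⟨hm1, hm2⟩, hmF⟩ := hm
        obtain ⟨j, b, h1, h2, h3, rfl⟩ := (hF _).1 hmF
        have hnd : ¬ p ∣ b := (hp.coprime_iff_not_dvd).1 h2.symm
        simp only [Finset.mem_coe, Finset.mem_filter, Finset.mem_Ioc]
        rw [hoc j b hnd h1]
        exact ⟨⟨h1, h3⟩, hnd⟩
      · intro m1 hm1 m2 hm2 heq
        simp only [Finset.coe_filter, Set.mem_setOf_eq, Finset.mem_Ico] at hm1 hm2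
        obtain ⟨⟨hm1a, hm1b⟩, hmF1⟩ := hm1
        obtain ⟨⟨hm2a, hm2b⟩, hmF2⟩ := hm2
        obtain ⟨j1, b1, hb1, hc1, hB1, rfl⟩ := (hF _).1 hmF1
        obtain ⟨j2, b2, hb2, hc2, hB2, rfl⟩ := (hF _).1 hmF2
        have hnd1 : ¬ p ∣ b1 := (hp.coprime_iff_not_dvd).1 hc1.symm
        have hnd2 : ¬ p ∣ b2 := (hp.coprime_iff_not_dvd).1 hc2.symm
        simp only at heq
        rw [hoc j1 b1 hnd1 hb1, hoc j2 b2 hnd2 hb2] at heq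
        subst heq
        rcases lt_trichotomy j1 j2 with h | h | h
        · exfalso
          have : p * (p ^ j1 * b1) ≤ p ^ j2 * b1 := by
            rw [← mul_assoc, ← pow_succ']
            exact Nat.mul_le_mul_right b1 (Nat.pow_le_pow_right (by omega) (by omega))
          have h4 : p * X ≤ p * (p ^ j1 * b1) := Nat.mul_le_mul_left p hm1a
          omega
        · rw [h]
        · exfalso
          have : p * (p ^ j2 * b1) ≤ p ^ j1 * b1 := by
            rw [← mul_assoc, ← pow_succ']
            exact Nat.mul_le_mul_right b1 (Nat.pow_le_pow_right (by omega) (by omega))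
          have h4 : p * X ≤ p * (p ^ j2 * b1) := Nat.mul_le_mul_left p hm2a
          omega
    omega
  -- base case: count F r ≤ r - 1
  have hbase : Nat.count F r ≤ r - 1 := by
    rw [Nat.count_eq_card_filter_range]
    calc ((Finset.range r).filter F).card ≤ (Finset.Ico 1 r).card := by
          apply Finset.card_le_card
          intro m hm
          simp only [Finset.mem_filter, Finset.mem_range] at hm
          obtain ⟨j, b, h1, _, _, rfl⟩ := (hF _).1 hm.2
          have : 0 < p ^ j * b := by positivity
          simp only [Finset.mem_Ico]
          omega
      _ = r - 1 := by simp
  -- main induction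
  have hmain : ∀ q : ℕ, Nat.count F (p ^ q * r) ≤ q * s + (r - 1) := by
    intro q
    induction q with
    | zero => simpa using hbase
    | succ q ih =>
      have hXpos : 0 < p ^ q * r := by positivity
      calc Nat.count F (p ^ (q + 1) * r) = Nat.count F (p * (p ^ q * r)) := by
            ring_nf
        _ ≤ Nat.count F (p ^ q * r) + s := hstep _ hXpos
        _ ≤ (q + 1) * s + (r - 1) := by
            have hh : (q + 1) * s = q * s + s := by ring
            omega
  have hfin : Nat.count F (p ^ q * r) ≤ n - 1 := by
    have := hmain q
    omega
  exact (Nat.count_le_iff_le_nth hinf).1 hfin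
end

section
/- Let p be a prime, s ≥ 1, ℓ ≥ 1, and write ℓ = q·s + r with 1 ≤ r ≤ s. Then the sum of the first ℓ terms of the sequence (c_i) satisfies ∑_{i=1}^{ℓ} c_i ≥ (s(s+1)/2)·(p^q − 1)/(p−1) + (r(r+1)/2)·p^q. -/
open Finset

lemma aux_coprime_card {p s : ℕ} (hp : p.Prime) (hs : 1 ≤ s) :
    #{b ∈ Finset.Ioc 0 (s + ⌈(s : ℚ) / (p - 1)⌉₊ - 1) | Nat.Coprime b p} ≤ s := by
  classical
  set t := ⌈(s : ℚ) / (p - 1)⌉₊ with ht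
  have hp2 := hp.two_le
  have hpq : (0 : ℚ) < (p : ℚ) - 1 := by
    have : (1 : ℚ) < p := by exact_mod_cast hp2
    linarith
  have ht1 : 1 ≤ t := Nat.ceil_pos.mpr (div_pos (by exact_mod_cast hs) hpq)
  have hlt : (p - 1) * (t - 1) < s := by
    have h1 : (t - 1 : ℕ) < t := by omega
    have h2 : ((t - 1 : ℕ) : ℚ) < (s : ℚ) / (p - 1) := Nat.lt_ceil.mp h1
    have h3 : ((t - 1 : ℕ) : ℚ) * ((p : ℚ) - 1) < s := by
      rw [← lt_div_iff₀ hpq] at *; exact h2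
    rw [Nat.cast_sub ht1, Nat.cast_one] at h3
    have h4 : (((p - 1) * (t - 1) : ℕ) : ℚ) < (s : ℚ) := by
      rw [Nat.cast_mul, Nat.cast_sub (by omega : 1 ≤ p), Nat.cast_sub ht1,
        Nat.cast_one, mul_comm]
      exact h3
    exact_mod_cast h4
  set B := s + t - 1 with hB
  have hfilter : {b ∈ Finset.Ioc 0 B | Nat.Coprime b p}
      = {b ∈ Finset.Ioc 0 B | ¬ p ∣ b} := by
    apply Finset.filter_congr
    intro b _
    rw [Nat.coprime_comm]
    exact ⟨fun h => (Nat.Prime.coprime_iff_not_dvd hp).mp h,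
      fun h => (Nat.Prime.coprime_iff_not_dvd hp).mpr h⟩
  rw [hfilter]
  have hsplit := Finset.card_filter_add_card_filter_not
    (s := Finset.Ioc 0 B) (p := fun b => p ∣ b)
  simp only [Nat.Ioc_filter_dvd_card_eq_div, Nat.card_Ioc, Nat.sub_zero] at hsplit
  have hdiv : t - 1 ≤ B / p := by
    rw [Nat.le_div_iff_mul_le (by omega : 0 < p)]
    obtain ⟨a, rfl⟩ : ∃ a, p = a + 1 := ⟨p - 1, by omega⟩
    have : (t - 1) * (a + 1) = a * (t - 1) + (t - 1) := by ring
    simp only [Nat.add_sub_cancel] at hlt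
    omega
  omega


lemma aux_F_pos {p s : ℕ} (hp : p.Prime) {F : ℕ → Prop}
    (hF : ∀ m, F m ↔ ∃ j b, 0 < b ∧ Nat.Coprime b p ∧
      b ≤ s + ⌈(s : ℚ) / (p - 1)⌉₊ - 1 ∧ m = p ^ j * b)
    {m : ℕ} (hm : F m) : 0 < m := by
  obtain ⟨j, b, hb, -, -, rfl⟩ := (hF m).mp hm
  exact Nat.mul_pos (pow_pos hp.pos j) hb

-- membership: p^j * n ∈ F for 1 ≤ n ≤ B
lemma aux_F_mem {p s : ℕ} (hp : p.Prime) {F : ℕ → Prop}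
    (hF : ∀ m, F m ↔ ∃ j b, 0 < b ∧ Nat.Coprime b p ∧
      b ≤ s + ⌈(s : ℚ) / (p - 1)⌉₊ - 1 ∧ m = p ^ j * b)
    (j n : ℕ) (hn : 0 < n) (hnB : n ≤ s + ⌈(s : ℚ) / (p - 1)⌉₊ - 1) :
    F (p ^ j * n) := by
  rw [hF]
  refine ⟨j + n.factorization p, ordCompl[p] n, Nat.ordCompl_pos p hn.ne',
    (Nat.coprime_ordCompl hp hn.ne').symm,
    le_trans (Nat.ordCompl_le n p) hnB, ?_⟩
  rw [pow_add, mul_assoc, Nat.ordProj_mul_ordCompl_eq_self]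

lemma aux_count {p s : ℕ} (hp : p.Prime) (hs : 1 ≤ s) {F : ℕ → Prop}
    [DecidablePred F]
    (hF : ∀ m, F m ↔ ∃ j b, 0 < b ∧ Nat.Coprime b p ∧
      b ≤ s + ⌈(s : ℚ) / (p - 1)⌉₊ - 1 ∧ m = p ^ j * b)
    (j k : ℕ) (hk1 : 1 ≤ k) (hks : k ≤ s) :
    Nat.count F (p ^ j * k) ≤ j * s + (k - 1) := by
  classical
  set B := s + ⌈(s : ℚ) / (p - 1)⌉₊ - 1 with hB
  have hppos : 0 < p := hp.pos
  have hpj : 0 < p ^ j := pow_pos hppos j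
  rw [Nat.count_eq_card_filter_range]
  set S : Finset ℕ := {x ∈ range (p ^ j * k) | F x} with hS
  have hsplit := Finset.card_filter_add_card_filter_not
    (s := S) (p := fun m => p ^ j ∣ m)
  have h1 : #{m ∈ S | p ^ j ∣ m} ≤ k - 1 := by
    refine le_trans (Finset.card_le_card_of_injOn (t := Finset.Icc 1 (k - 1))
      (fun m => m / p ^ j) ?_ ?_) (by rw [Nat.card_Icc]; omega)
    · intro m hm
      simp only [Finset.mem_coe, hS, Finset.mem_filter, Finset.mem_range] at hm
      obtain ⟨⟨hmlt, hmF⟩, hdvd⟩ := hm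
      have hm0 : 0 < m := aux_F_pos hp hF hmF
      have h1' : 1 ≤ m / p ^ j := (Nat.one_le_div_iff hpj).mpr (Nat.le_of_dvd hm0 hdvd)
      have h2' : m / p ^ j < k := Nat.div_lt_of_lt_mul hmlt
      simp only [Finset.mem_coe, Finset.mem_Icc]
      omega
    · intro m hm m' hm' heq
      simp only [Finset.mem_coe, hS, Finset.mem_filter, Finset.mem_range] at hm hm'
      have heq' : m / p ^ j = m' / p ^ j := heq
      have e1 : m / p ^ j * p ^ j = m := Nat.div_mul_cancel hm.2
      have e2 : m' / p ^ j * p ^ j = m' := Nat.div_mul_cancel hm'.2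
      rw [heq'] at e1
      omega
  have h2 : #{m ∈ S | ¬ p ^ j ∣ m} ≤ j * s := by
    have hcard := aux_coprime_card hp hs
    calc #{m ∈ S | ¬ p ^ j ∣ m}
        ≤ #((Finset.range j) ×ˢ {b ∈ Finset.Ioc 0 B | Nat.Coprime b p}) := by
          apply Finset.card_le_card_of_injOn
            (fun m => (m.factorization p, ordCompl[p] m))
          · intro m hm
            simp only [Finset.mem_coe, hS, Finset.mem_filter, Finset.mem_range] at hm
            obtain ⟨⟨hmlt, hmF⟩, hndvd⟩ := hm
            have hm0 : 0 < m := aux_F_pos hp hF hmF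
            obtain ⟨a, b, hb0, hbcop, hbB, hmeq⟩ := (hF m).mp hmF
            have hpb : ¬ p ∣ b := (Nat.Prime.coprime_iff_not_dvd hp).mp hbcop.symm
            have hfa : m.factorization p = a := by
              rw [hmeq, Nat.factorization_mul (pow_ne_zero a hppos.ne') hb0.ne']
              simp [hp.factorization_pow, Nat.factorization_eq_zero_of_not_dvd hpb]
            have haj : m.factorization p < j := by
              by_contra hcon
              exact hndvd ((Nat.Prime.pow_dvd_iff_le_factorization hp hm0.ne').mpr
                (by omega))
            have hoc : ordCompl[p] m = b := by
              rw [hfa, hmeq, Nat.mul_div_cancel_left b (pow_pos hppos a)]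
            simp only [Finset.mem_coe, Finset.mem_product, Finset.mem_range, Finset.mem_filter,
              Finset.mem_Ioc, hoc]
            exact ⟨haj, ⟨hb0, hbB⟩, hbcop⟩
          · intro m hm m' hm' heq
            simp only [Prod.mk.injEq] at heq
            have e1 := Nat.ordProj_mul_ordCompl_eq_self m p
            have e2 := Nat.ordProj_mul_ordCompl_eq_self m' p
            rw [← e1, ← e2, heq.2, heq.1]
      _ ≤ j * s := by
          rw [Finset.card_product, Finset.card_range]
          exact Nat.mul_le_mul_left j hcard
  omega

lemma aux_infinite {p s : ℕ} (hp : p.Prime) (hs : 1 ≤ s) {F : ℕ → Prop}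
    (hF : ∀ m, F m ↔ ∃ j b, 0 < b ∧ Nat.Coprime b p ∧
      b ≤ s + ⌈(s : ℚ) / (p - 1)⌉₊ - 1 ∧ m = p ^ j * b) :
    (setOf F).Infinite := by
  have hB1 : 1 ≤ s + ⌈(s : ℚ) / (p - 1)⌉₊ - 1 := by
    have : (1:ℕ) ≤ ⌈(s : ℚ) / (p - 1)⌉₊ := by
      apply Nat.ceil_pos.mpr
      apply div_pos (by exact_mod_cast hs)
      have : (1 : ℚ) < p := by exact_mod_cast hp.two_le
      linarith
    omega
  refine Set.infinite_of_injective_forall_mem (f := fun n : ℕ => p ^ n)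
    (fun a b hab => Nat.pow_right_injective hp.two_le hab) ?_
  intro n
  have := aux_F_mem hp hF n 1 one_pos hB1
  exact (by simpa using this : F (p ^ n))

lemma aux_nth {p s : ℕ} (hp : p.Prime) (hs : 1 ≤ s) {F : ℕ → Prop}
    (hF : ∀ m, F m ↔ ∃ j b, 0 < b ∧ Nat.Coprime b p ∧
      b ≤ s + ⌈(s : ℚ) / (p - 1)⌉₊ - 1 ∧ m = p ^ j * b)
    (j k : ℕ) (hk1 : 1 ≤ k) (hks : k ≤ s) :
    (p ^ j * k : ℕ) ≤ Nat.nth F (j * s + (k - 1)) := by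
  classical
  exact (Nat.count_le_iff_le_nth (aux_infinite hp hs hF)).mp
    (aux_count hp hs hF j k hk1 hks)

/-- Part of Proposition `bou`: with `(c_i)` the increasing enumeration of
`F_s = { p^j · b : b ∈ E_s, j ≥ 0 }`, and `ℓ = q·s + r`, `1 ≤ r ≤ s`, one has
`∑_{i=1}^{ℓ} c_i ≥ (s(s+1)/2)·(p^q − 1)/(p−1) + (r(r+1)/2)·p^q`. -/
theorem stmt_6 (p s : ℕ) (hp : p.Prime) (hs : 1 ≤ s)
    (F : ℕ → Prop)
    (hF : ∀ m, F m ↔ ∃ j b, 0 < b ∧ Nat.Coprime b p ∧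
      b ≤ s + ⌈(s : ℚ) / (p - 1)⌉₊ - 1 ∧ m = p ^ j * b)
    (ℓ q r : ℕ) (hl : ℓ = q * s + r) (hr1 : 1 ≤ r) (hrs : r ≤ s) :
    ((s : ℚ) * (s + 1) / 2) * (((p : ℚ) ^ q - 1) / (p - 1))
      + ((r : ℚ) * (r + 1) / 2) * (p : ℚ) ^ q
      ≤ ∑ i ∈ Finset.Icc 1 ℓ, (Nat.nth F (i - 1) : ℚ) := by
  subst hl
  have hc : ∀ j k : ℕ, 1 ≤ k → k ≤ s →
      ((p : ℚ) ^ j * k ≤ (Nat.nth F (j * s + (k - 1)) : ℚ)) := by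
    intro j k h1 h2
    exact_mod_cast aux_nth hp hs hF j k h1 h2
  -- main bound with geometric sum expressed as ∑ over range
  have key : ∀ q r : ℕ, 1 ≤ r → r ≤ s →
      ((s : ℚ) * (s + 1) / 2) * (∑ j ∈ range q, (p : ℚ) ^ j)
        + ((r : ℚ) * (r + 1) / 2) * (p : ℚ) ^ q
        ≤ ∑ i ∈ Finset.Icc 1 (q * s + r), (Nat.nth F (i - 1) : ℚ) := by
    have inner : ∀ Q : ℕ,
        (((s : ℚ) * (s + 1) / 2) * (∑ j ∈ range Q, (p : ℚ) ^ j)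
          + ((1 : ℚ) * (1 + 1) / 2) * (p : ℚ) ^ Q
          ≤ ∑ i ∈ Finset.Icc 1 (Q * s + 1), (Nat.nth F (i - 1) : ℚ)) →
        ∀ r : ℕ, 1 ≤ r → r ≤ s →
        ((s : ℚ) * (s + 1) / 2) * (∑ j ∈ range Q, (p : ℚ) ^ j)
          + ((r : ℚ) * (r + 1) / 2) * (p : ℚ) ^ Q
          ≤ ∑ i ∈ Finset.Icc 1 (Q * s + r), (Nat.nth F (i - 1) : ℚ) := by
      intro Q hbase r
      induction r with
      | zero => intro h; omega
      | succ r ih =>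
        intro _ h2
        rcases Nat.eq_zero_or_pos r with rfl | hr
        · simpa using hbase
        · have prev := ih hr (by omega)
          have hsum : ∑ i ∈ Finset.Icc 1 (Q * s + (r + 1)), (Nat.nth F (i - 1) : ℚ)
              = (∑ i ∈ Finset.Icc 1 (Q * s + r), (Nat.nth F (i - 1) : ℚ))
                + (Nat.nth F (Q * s + r + 1 - 1) : ℚ) := by
            rw [← add_assoc]
            exact Finset.sum_Icc_succ_top (by omega) _
          have hterm := hc Q (r + 1) (by omega) h2
          have hidx : Q * s + (r + 1 - 1) = Q * s + r + 1 - 1 := by omega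
          rw [hidx] at hterm
          rw [hsum]
          simp only [Nat.add_sub_cancel] at hterm ⊢
          push_cast at hterm ⊢
          have hmul : ((r : ℚ) + 1) * ((r : ℚ) + 1 + 1) / 2 * (p : ℚ) ^ Q
              = (r : ℚ) * ((r : ℚ) + 1) / 2 * (p : ℚ) ^ Q
                + ((r : ℚ) + 1) * (p : ℚ) ^ Q := by ring
          nlinarith [prev, hterm, hmul]
    intro q
    induction q with
    | zero =>
      apply inner
      have h1 := hc 0 1 le_rfl hs
      simp only [pow_zero, Nat.mul_one, mul_one, zero_mul, Nat.zero_mul, zero_add] at h1 ⊢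
      rw [Finset.Icc_self, Finset.sum_singleton]
      simp only [range_zero, sum_empty, mul_zero, zero_add]
      norm_num
      exact_mod_cast h1
    | succ q ihq =>
      apply inner
      have hprev := ihq s hs le_rfl
      have hterm := hc (q + 1) 1 le_rfl hs
      have hidx : (q + 1) * s + (1 - 1) = (q + 1) * s := by omega
      rw [hidx] at hterm
      have hsum : ∑ i ∈ Finset.Icc 1 ((q + 1) * s + 1), (Nat.nth F (i - 1) : ℚ)
          = (∑ i ∈ Finset.Icc 1 (q * s + s), (Nat.nth F (i - 1) : ℚ))
            + (Nat.nth F ((q + 1) * s + 1 - 1) : ℚ) := by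
        have h : (q + 1) * s + 1 = (q * s + s) + 1 := by ring
        rw [h]
        exact Finset.sum_Icc_succ_top (by omega) _
      have hidx2 : (q + 1) * s + 1 - 1 = (q + 1) * s := by omega
      rw [hidx2] at hsum
      rw [hsum]
      rw [Finset.sum_range_succ]
      push_cast at hterm ⊢
      nlinarith [hprev, hterm]
  have hkey := key q r hr1 hrs
  have hgeom : (∑ j ∈ range q, (p : ℚ) ^ j) = ((p : ℚ) ^ q - 1) / ((p : ℚ) - 1) := by
    have hp1 : (p : ℚ) ≠ 1 := by
      have := hp.two_le
      intro h
      have : (p : ℚ) ≥ 2 := by exact_mod_cast this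
      linarith
    exact geom_sum_eq hp1 q
  rw [hgeom] at hkey
  exact hkey
end

section
/- Let p be a prime, ℓ ≥ s ≥ 1, and let n₁ < … < n_s be positive integers coprime to p, with positive integers ℓ₁,…,ℓ_s satisfying ℓ₁+⋯+ℓ_s = ℓ, such that the ℓ integers n_i · p^j (1 ≤ i ≤ s, 0 ≤ j ≤ ℓ_i − 1) are pairwise distinct. Write ℓ = q·s + r with 1 ≤ r ≤ s. Then ∑_{i=1}^s n_i·(p^{ℓ_i} − 1)/(p−1) ≥ (s(s+1)/2)·(p^q − 1)/(p−1) + (r(r+1)/2)·p^q. -/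
open Finset

/-- Sum of the "coprime counts" over scales is at most `x`. -/
lemma sumU_le (p : ℕ) (B : ℕ) : ∀ x : ℕ,
    ∑ j ∈ range B, (x / p ^ j - x / p ^ j / p) ≤ x := by
  induction B with
  | zero => intro x; simp
  | succ B ih =>
    intro x
    rw [Finset.sum_range_succ' (fun j => x / p ^ j - x / p ^ j / p) B]
    have hdiv : ∀ j : ℕ, x / p ^ (j + 1) = x / p / p ^ j := by
      intro j
      rw [pow_succ', Nat.div_div_eq_div_mul]
    simp only [hdiv, pow_zero, Nat.div_one]
    have h1 := ih (x / p)
    have h2 : x / p ≤ x := Nat.div_le_self x p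
    omega

/-- The key counting claim. -/
lemma claim (p : ℕ) (hp : 2 ≤ p) (s r : ℕ) (hr1 : 1 ≤ r) (hrs : r ≤ s) :
    ∀ q x B : ℕ,
      min (q * s + r) (∑ j ∈ range B, min s (x / p ^ j - x / p ^ j / p))
        ≤ (∑ j ∈ range q, min s (x / p ^ j)) + min r (x / p ^ q) := by
  intro q
  induction q with
  | zero =>
    intro x B
    have hSS : (∑ j ∈ range B, min s (x / p ^ j - x / p ^ j / p)) ≤ x :=
      le_trans (Finset.sum_le_sum fun j _ => min_le_right _ _) (sumU_le p B x)
    simp only [Nat.zero_mul, Nat.zero_add, range_zero, sum_empty, pow_zero, Nat.div_one]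
    omega
  | succ q ih =>
    intro x B
    cases B with
    | zero =>
      simp only [range_zero, sum_empty, Nat.min_zero]
      exact Nat.zero_le _
    | succ B =>
      rw [Finset.sum_range_succ' (fun j => min s (x / p ^ j - x / p ^ j / p)) B,
        Finset.sum_range_succ' (fun j => min s (x / p ^ j)) q]
      have hdiv : ∀ j : ℕ, x / p ^ (j + 1) = x / p / p ^ j := by
        intro j
        rw [pow_succ', Nat.div_div_eq_div_mul]
      simp only [hdiv, pow_zero, Nat.div_one]
      have hIH := ih (x / p) B
      have hSS' : (∑ j ∈ range B, min s (x / p / p ^ j - x / p / p ^ j / p)) ≤ x / p :=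
        le_trans (Finset.sum_le_sum fun j _ => min_le_right _ _) (sumU_le p B (x / p))
      have h1 : x / p * p ≤ x := Nat.div_mul_le_self x p
      have h2 : x / p * 2 ≤ x / p * p := Nat.mul_le_mul_left _ hp
      rcases Nat.eq_zero_or_pos q with rfl | hqpos
      · simp only [Nat.zero_mul, Nat.zero_add, range_zero, sum_empty, pow_zero,
          Nat.div_one] at hIH ⊢
        omega
      · have hqs : s ≤ q * s := Nat.le_mul_of_pos_left s hqpos
        have hmul : (q + 1) * s = q * s + s := by ring
        rw [hmul]
        omega

/-- Counting k < s with (k+1)*m ≤ x. -/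
lemma count_range_mul (s m x : ℕ) (hm : 0 < m) :
    ((range s).filter (fun k => (k + 1) * m ≤ x)).card = min s (x / m) := by
  have h : (range s).filter (fun k => (k + 1) * m ≤ x) = range (min s (x / m)) := by
    ext k
    simp only [Finset.mem_filter, Finset.mem_range, lt_min_iff]
    have hiff : (k + 1) * m ≤ x ↔ k + 1 ≤ x / m := (Nat.le_div_iff_mul_le hm).symm
    constructor
    · rintro ⟨hk, hkm⟩
      exact ⟨hk, hiff.1 hkm⟩
    · rintro ⟨hk, hkm⟩
      exact ⟨hk, hiff.2 hkm⟩
  rw [h, Finset.card_range]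

/-- Distinct coprime-to-p values ≤ y number at most y - y/p. -/
lemma coprime_count {s : ℕ} (p : ℕ) (hp2 : 2 ≤ p) (n : Fin s → ℕ)
    (hninj : Function.Injective n) (hcop : ∀ i, Nat.Coprime (n i) p)
    (Q : Fin s → Prop) [DecidablePred Q] (y : ℕ) (hQ : ∀ i, Q i → n i ≤ y) :
    (Finset.univ.filter Q).card ≤ y - y / p := by
  have hcard : ((Finset.Ioc 0 y).filter (fun m => ¬ p ∣ m)).card = y - y / p := by
    have h1 := Finset.card_filter_add_card_filter_not
      (s := Finset.Ioc 0 y) (p := fun m => p ∣ m)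
    have h2 : ((Finset.Ioc 0 y).filter (fun m => p ∣ m)).card = y / p :=
      Nat.Ioc_filter_dvd_card_eq_div y p
    have h3 : (Finset.Ioc 0 y).card = y := by simp
    omega
  rw [← hcard]
  apply Finset.card_le_card_of_injOn n
  · intro i hi
    simp only [Finset.mem_coe, Finset.mem_filter, Finset.mem_univ, true_and] at hi
    have hni : 0 < n i := by
      rcases Nat.eq_zero_or_pos (n i) with h | h
      · exfalso
        have := hcop i
        rw [h] at this
        rw [Nat.coprime_zero_left] at this
        omega
      · exact h
    have hndvd : ¬ p ∣ n i := by
      intro hdvd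
      have := ((hcop i).symm.eq_one_of_dvd hdvd)
      omega
    simp only [Finset.mem_coe, Finset.mem_filter, Finset.mem_Ioc]
    exact ⟨⟨hni, hQ i hi⟩, hndvd⟩
  · exact fun a _ b _ h => hninj h

/-- Layer cake identity. -/
lemma layercake {α : Type*} (F : Finset α) (f : α → ℕ) (X : ℕ)
    (hf : ∀ a ∈ F, f a ≤ X) :
    ∑ a ∈ F, f a = ∑ x ∈ range X, (F.filter (fun a => x < f a)).card := by
  have h1 : ∀ a ∈ F, f a = ((range X).filter (fun x => x < f a)).card := by
    intro a ha
    have h : (range X).filter (fun x => x < f a) = range (f a) := by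
      ext y
      simp only [Finset.mem_filter, Finset.mem_range]
      have := hf a ha
      omega
    rw [h, Finset.card_range]
  rw [Finset.sum_congr rfl h1]
  have h2 : ∀ a ∈ F, ((range X).filter (fun x => x < f a)).card
      = ∑ x ∈ range X, if x < f a then 1 else 0 := by
    intro a _
    exact Finset.card_filter _ _
  rw [Finset.sum_congr rfl h2, Finset.sum_comm]
  refine Finset.sum_congr rfl fun x _ => ?_
  exact (Finset.card_filter _ _).symm

/-- Splitting counts. -/
lemma count_split {α : Type*} (F : Finset α) (f : α → ℕ) (x : ℕ) :
    (F.filter fun a => x < f a).card + (F.filter fun a => f a ≤ x).card = F.card := by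
  classical
  have h := Finset.card_filter_add_card_filter_not
    (s := F) (p := fun a => x < f a)
  have h2 : (F.filter fun a => ¬ x < f a) = F.filter fun a => f a ≤ x := by
    apply Finset.filter_congr
    intro a _
    simp [Nat.not_lt]
  rw [h2] at h
  exact h

/-- Main inequality in ℕ. -/
theorem main_nat (p : ℕ) (hp2 : 2 ≤ p) (s q r : ℕ) (hr1 : 1 ≤ r) (hrs : r ≤ s)
    (n L : Fin s → ℕ) (hninj : Function.Injective n)
    (hcop : ∀ i, Nat.Coprime (n i) p)
    (hsum : ∑ i, L i = q * s + r) :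
    (∑ k ∈ range s, (k + 1)) * (∑ j ∈ range q, p ^ j)
      + (∑ k ∈ range r, (k + 1)) * p ^ q
      ≤ ∑ i, n i * ∑ j ∈ range (L i), p ^ j := by
  classical
  have hp0 : 0 < p := by omega
  have hp1 : 1 ≤ p := by omega
  set J : ℕ := q * s + r + 1 with hJdef
  have hLJ : ∀ i, L i ≤ J := by
    intro i
    have : L i ≤ ∑ i, L i :=
      Finset.single_le_sum (f := L) (fun i _ => Nat.zero_le _) (Finset.mem_univ i)
    omega
  set Ts : ℕ := ∑ k ∈ range s, (k + 1) with hTs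
  set Tr : ℕ := ∑ k ∈ range r, (k + 1) with hTr
  set X : ℕ := Ts * p ^ q + ∑ i, n i * p ^ (L i) with hX
  -- the cells
  set cellsL : Finset (Fin s × ℕ) :=
    (Finset.univ ×ˢ range J).filter (fun a => a.2 < L a.1) with hcellsL
  set D1 : Finset (ℕ × ℕ) := (range q) ×ˢ (range s) with hD1
  set D2 : Finset ℕ := range r with hD2
  set vL : Fin s × ℕ → ℕ := fun a => n a.1 * p ^ a.2 with hvL
  set v1 : ℕ × ℕ → ℕ := fun a => (a.2 + 1) * p ^ a.1 with hv1
  set v2 : ℕ → ℕ := fun k => (k + 1) * p ^ q with hv2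
  -- sums over cells
  have hfiltL : ∀ i : Fin s, (range J).filter (fun j => j < L i) = range (L i) := by
    intro i
    ext j
    simp only [Finset.mem_filter, Finset.mem_range]
    have := hLJ i
    omega
  have hsumL : ∑ a ∈ cellsL, vL a = ∑ i, n i * ∑ j ∈ range (L i), p ^ j := by
    rw [hcellsL, Finset.sum_filter]
    simp only [Finset.sum_product, hvL]
    refine Finset.sum_congr rfl fun i _ => ?_
    rw [← Finset.sum_filter, hfiltL i, Finset.mul_sum]
  have hcardL : cellsL.card = q * s + r := by
    rw [hcellsL, Finset.card_filter]
    simp only [Finset.sum_product]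
    have h5 : ∀ i : Fin s, (∑ j ∈ range J, if j < L i then 1 else 0) = L i := by
      intro i
      rw [← Finset.card_filter, hfiltL i, Finset.card_range]
    rw [Finset.sum_congr rfl fun i _ => h5 i, hsum]
  have hsum1 : ∑ a ∈ D1, v1 a = Ts * (∑ j ∈ range q, p ^ j) := by
    rw [hD1]
    simp only [Finset.sum_product, hv1]
    rw [Finset.mul_sum]
    refine Finset.sum_congr rfl fun j _ => ?_
    rw [hTs, Finset.sum_mul]
  have hsum2 : ∑ k ∈ D2, v2 k = Tr * p ^ q := by
    simp only [hv2]
    rw [hTr, Finset.sum_mul]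
  have hcard1 : D1.card = q * s := by
    rw [hD1, Finset.card_product, Finset.card_range, Finset.card_range]
  have hcard2 : D2.card = r := by rw [hD2, Finset.card_range]
  -- bounds for layercake
  have hTs_le : ∀ k < s, k + 1 ≤ Ts := by
    intro k hk
    exact Finset.single_le_sum (f := fun k => k + 1)
      (fun i _ => Nat.zero_le _) (Finset.mem_range.2 hk)
  have hboundL : ∀ a ∈ cellsL, vL a ≤ X := by
    intro a ha
    rw [hcellsL] at ha
    simp only [Finset.mem_filter, Finset.mem_product] at ha
    have h1 : p ^ a.2 ≤ p ^ (L a.1) := Nat.pow_le_pow_right hp1 (le_of_lt ha.2)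
    have h2 : n a.1 * p ^ a.2 ≤ n a.1 * p ^ (L a.1) := Nat.mul_le_mul_left _ h1
    have h3 : n a.1 * p ^ (L a.1) ≤ ∑ i, n i * p ^ (L i) :=
      Finset.single_le_sum (f := fun i => n i * p ^ (L i))
        (fun i _ => Nat.zero_le _) (Finset.mem_univ a.1)
    simp only [hvL]
    omega
  have hbound1 : ∀ a ∈ D1, v1 a ≤ X := by
    intro a ha
    rw [hD1] at ha
    simp only [Finset.mem_product, Finset.mem_range] at ha
    have h1 : a.2 + 1 ≤ Ts := hTs_le a.2 ha.2
    have h2 : p ^ a.1 ≤ p ^ q := Nat.pow_le_pow_right hp1 (le_of_lt ha.1)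
    have h3 : (a.2 + 1) * p ^ a.1 ≤ Ts * p ^ q := Nat.mul_le_mul h1 h2
    simp only [hv1]
    omega
  have hbound2 : ∀ k ∈ D2, v2 k ≤ X := by
    intro k hk
    rw [hD2] at hk
    simp only [Finset.mem_range] at hk
    have h1 : k + 1 ≤ Ts := hTs_le k (lt_of_lt_of_le hk hrs)
    have h3 : (k + 1) * p ^ q ≤ Ts * p ^ q := Nat.mul_le_mul_right _ h1
    simp only [hv2]
    omega
  -- per-threshold counting inequality
  have hperx : ∀ x : ℕ,
      (D1.filter fun a => x < v1 a).card + (D2.filter fun k => x < v2 k).card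
        ≤ (cellsL.filter fun a => x < vL a).card := by
    intro x
    have hsplitL := count_split cellsL vL x
    have hsplit1 := count_split D1 v1 x
    have hsplit2 := count_split D2 v2 x
    -- compute N1
    have hN1 : (D1.filter fun a => v1 a ≤ x).card
        = ∑ j ∈ range q, min s (x / p ^ j) := by
      rw [hD1, Finset.card_filter]
      simp only [Finset.sum_product, hv1]
      refine Finset.sum_congr rfl fun j _ => ?_
      rw [← Finset.card_filter]
      exact count_range_mul s (p ^ j) x (Nat.pow_pos (n := j) hp0)
    have hN2 : (D2.filter fun k => v2 k ≤ x).card = min r (x / p ^ q) := by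
      simp only [hv2, hD2]
      exact count_range_mul r (p ^ q) x (Nat.pow_pos (n := q) hp0)
    -- NL bounds
    have hNL_card : (cellsL.filter fun a => vL a ≤ x).card ≤ q * s + r := by
      calc (cellsL.filter fun a => vL a ≤ x).card ≤ cellsL.card := Finset.card_filter_le _ _
        _ = q * s + r := hcardL
    have hNL_grouped : (cellsL.filter fun a => vL a ≤ x).card
        = ∑ j ∈ range J, (Finset.univ.filter
            (fun i : Fin s => j < L i ∧ n i * p ^ j ≤ x)).card := by
      rw [hcellsL, Finset.filter_filter, Finset.card_filter]
      simp only [Finset.sum_product, hvL]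
      rw [Finset.sum_comm]
      refine Finset.sum_congr rfl fun j _ => ?_
      rw [← Finset.card_filter]
    have hNL_min : (cellsL.filter fun a => vL a ≤ x).card
        ≤ ∑ j ∈ range J, min s (x / p ^ j - x / p ^ j / p) := by
      rw [hNL_grouped]
      refine Finset.sum_le_sum fun j _ => ?_
      refine le_min ?_ ?_
      · calc (Finset.univ.filter
            (fun i : Fin s => j < L i ∧ n i * p ^ j ≤ x)).card
            ≤ (Finset.univ : Finset (Fin s)).card := Finset.card_filter_le _ _
          _ = s := by simp
      · refine coprime_count p hp2 n hninj hcop _ (x / p ^ j) ?_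
        intro i hi
        exact (Nat.le_div_iff_mul_le (Nat.pow_pos (n := j) hp0)).2 hi.2
    have hclaim := claim p hp2 s r hr1 hrs q x J
    omega
  -- put it together
  calc Ts * (∑ j ∈ range q, p ^ j) + Tr * p ^ q
      = ∑ a ∈ D1, v1 a + ∑ k ∈ D2, v2 k := by rw [hsum1, hsum2]
    _ = (∑ x ∈ range X, (D1.filter fun a => x < v1 a).card)
        + ∑ x ∈ range X, (D2.filter fun k => x < v2 k).card := by
        rw [layercake D1 v1 X hbound1, layercake D2 v2 X hbound2]
    _ = ∑ x ∈ range X, ((D1.filter fun a => x < v1 a).card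
        + (D2.filter fun k => x < v2 k).card) := by
        rw [Finset.sum_add_distrib]
    _ ≤ ∑ x ∈ range X, (cellsL.filter fun a => x < vL a).card :=
        Finset.sum_le_sum fun x _ => hperx x
    _ = ∑ a ∈ cellsL, vL a := (layercake cellsL vL X hboundL).symm
    _ = ∑ i, n i * ∑ j ∈ range (L i), p ^ j := hsumL

lemma Tcast (m : ℕ) : ((∑ k ∈ range m, (k + 1) : ℕ) : ℚ) = (m : ℚ) * (m + 1) / 2 := by
  induction m with
  | zero => simp
  | succ m ih =>
    rw [Finset.sum_range_succ, Nat.cast_add, ih]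
    push_cast
    ring

/-- Proposition `bou`: if the `ℓ` integers `n_i · p^j` (`1 ≤ i ≤ s`, `0 ≤ j < ℓ_i`),
with `n₁ < … < n_s` positive and coprime to `p` and `ℓ₁ + ⋯ + ℓ_s = ℓ`, are pairwise
distinct, and `ℓ = q·s + r` with `1 ≤ r ≤ s`, then
`∑ n_i (p^{ℓ_i} − 1)/(p−1) ≥ (s(s+1)/2)(p^q − 1)/(p−1) + (r(r+1)/2) p^q`. -/
theorem stmt_7 (p s ℓ : ℕ) (hp : p.Prime) (hs : 1 ≤ s) (hls : s ≤ ℓ)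
    (n : Fin s → ℕ) (hmono : StrictMono n)
    (hpos : ∀ i, 0 < n i) (hcop : ∀ i, Nat.Coprime (n i) p)
    (L : Fin s → ℕ) (hL : ∀ i, 1 ≤ L i) (hsum : ∑ i, L i = ℓ)
    (hinj : ∀ i j i' j', j < L i → j' < L i' →
      n i * p ^ j = n i' * p ^ j' → i = i' ∧ j = j')
    (q r : ℕ) (hl : ℓ = q * s + r) (hr1 : 1 ≤ r) (hrs : r ≤ s) :
    ((s : ℚ) * (s + 1) / 2) * (((p : ℚ) ^ q - 1) / (p - 1))
      + ((r : ℚ) * (r + 1) / 2) * (p : ℚ) ^ q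
      ≤ ∑ i, (n i : ℚ) * (((p : ℚ) ^ (L i) - 1) / (p - 1)) := by
  have hp2 : 2 ≤ p := hp.two_le
  have key := main_nat p hp2 s q r hr1 hrs n L hmono.injective hcop (by omega)
  have hp1 : (p : ℚ) ≠ 1 := by
    simp only [ne_eq, Nat.cast_eq_one]
    exact hp.ne_one
  have egeom : ∀ m : ℕ, ((p : ℚ) ^ m - 1) / ((p : ℚ) - 1) = ∑ j ∈ range m, (p : ℚ) ^ j :=
    fun m => (geom_sum_eq hp1 m).symm
  simp only [egeom]
  rw [← Tcast s, ← Tcast r]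
  exact_mod_cast key
end

section
/- Let p be an odd prime and n ≥ 1. There do not exist integers w, ℓ with w ≥ 3 and n·w + w/2 < ℓ ≤ n·w + w·(p−2)/(p−1) such that, writing ℓ = n·w + i, the inequality (w(w+1)/2)·(p^n − 1)/(p−1) + (i(i+1)/2)·p^n ≤ w·(p^{n+1} − 2)/(p−1) holds with w ≥ 6; in fact the inequality (w(w+1)/2)·(p^n−1) + (i(i+1)/2)·p^n·(p−1) ≤ w·(p^{n+1} − 2) with i > w/2 forces w < 6. -/
set_option maxHeartbeats 2000000 in
/-- Key estimate in the proof of Proposition `cas1`: if `p ≥ 5` is prime, `n ≥ 1`,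
`w ≥ 3`, `i > w/2`, and
`(w(w+1)/2)·(p^n−1)/(p−1) + (i(i+1)/2)·p^n ≤ w·(p^{n+1}−2)/(p−1)`, then `w < 6`. -/
theorem stmt_10 (p n w i : ℕ) (hp : p.Prime) (hp5 : 5 ≤ p) (hn : 1 ≤ n)
    (hw : 3 ≤ w) (hi : (w : ℚ) / 2 < i)
    (hineq : ((w : ℚ) * (w + 1) / 2) * (((p : ℚ) ^ n - 1) / (p - 1))
      + ((i : ℚ) * (i + 1) / 2) * (p : ℚ) ^ n
      ≤ (w : ℚ) * (((p : ℚ) ^ (n + 1) - 2) / (p - 1))) :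
    w < 6 := by
  by_contra h
  push_neg at h
  have hw6 : (6 : ℚ) ≤ w := by exact_mod_cast h
  have hp5' : (5 : ℚ) ≤ p := by exact_mod_cast hp5
  have hp1 : (0 : ℚ) < p - 1 := by linarith
  have hpn : (5 : ℚ) ≤ (p : ℚ) ^ n := by
    calc (5 : ℚ) ≤ (p : ℚ) ^ 1 := by simpa using hp5'
    _ ≤ (p : ℚ) ^ n := by
      apply pow_le_pow_right₀ (by linarith) hn
  -- 2i ≥ w + 1
  have h2i : (w : ℚ) + 1 ≤ 2 * i := by
    have : w < 2 * i := by
      have : (w : ℚ) < 2 * i := by linarith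
      exact_mod_cast this
    have : w + 1 ≤ 2 * i := this
    exact_mod_cast this
  -- clear denominators
  have key := mul_le_mul_of_nonneg_right hineq (le_of_lt hp1)
  have e1 : ((w : ℚ) * (w + 1) / 2) * (((p : ℚ) ^ n - 1) / (p - 1)) * (p - 1)
      = ((w : ℚ) * (w + 1) / 2) * ((p : ℚ) ^ n - 1) := by
    field_simp
  have e2 : (w : ℚ) * (((p : ℚ) ^ (n + 1) - 2) / (p - 1)) * (p - 1)
      = (w : ℚ) * ((p : ℚ) ^ (n + 1) - 2) := by
    field_simp
  rw [add_mul, e1] at key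
  rw [e2] at key
  have hterm : (0 : ℚ) ≤ ((w : ℚ) * (w + 1) / 2) * ((p : ℚ) ^ n - 1) := by
    have hw0 : (0 : ℚ) ≤ w := by positivity
    have h1 : (0:ℚ) ≤ (w:ℚ) * (w+1) := by nlinarith
    nlinarith
  have key2 : ((i : ℚ) * (i + 1) / 2) * (p : ℚ) ^ n * (p - 1)
      ≤ (w : ℚ) * ((p : ℚ) ^ (n + 1) - 2) := by linarith
  have hpow : (p : ℚ) ^ (n + 1) = (p : ℚ) ^ n * p := by ring
  rw [hpow] at key2
  have hi0 : (0 : ℚ) ≤ i := by positivity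
  have hq : (0:ℚ) < (p:ℚ)^n := by linarith
  have h' : ((i:ℚ)*(i+1)*((p:ℚ)-1)) * (p:ℚ)^n ≤ (2*(w:ℚ)*(p:ℚ)) * (p:ℚ)^n := by
    nlinarith [key2, hw6]
  have step1 : (i:ℚ)*(i+1)*((p:ℚ)-1) ≤ 2*(w:ℚ)*(p:ℚ) :=
    le_of_mul_le_mul_right h' hq
  have hsq : ((w:ℚ)+1)*((w:ℚ)+3) ≤ (2*(i:ℚ))*(2*(i:ℚ)+2) := by
    nlinarith [h2i, hw6, hi0]
  have step2 : ((w:ℚ)+1)*((w:ℚ)+3)*((p:ℚ)-1) ≤ 8*(w:ℚ)*(p:ℚ) := by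
    have := mul_le_mul_of_nonneg_right hsq (le_of_lt hp1)
    linarith [this, step1]
  have hA : (0:ℚ) ≤ ((w:ℚ)^2 - 4*(w:ℚ) + 3) * ((p:ℚ) - 5) := by
    apply mul_nonneg
    · nlinarith [hw6]
    · linarith
  have hB : (0:ℚ) ≤ (w:ℚ) * ((w:ℚ) - 6) := by
    apply mul_nonneg <;> linarith
  linarith [step2, hA, hB]
end

section
/- Let p ≥ 5 be a prime and D = {1,…,p−2}. Every solution (u_d)_{d∈D} of ∑ d·u_d ≡ 0 (mod p−1), ∑ d·u_d > 0, has p-weight ∑ s_p(u_d) ≥ 2. Consequently the p-density of D equals 2/(p−1). -/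
/-- A length-`ℓ` solution of the modular equation associated to `D` and `p`:
a tuple `(u_d)_{d∈D}` (encoded as a function vanishing off `D`) with
`0 ≤ u_d ≤ p^ℓ − 1`, `∑ d·u_d ≡ 0 mod p^ℓ − 1` and `∑ d·u_d > 0`. -/
def IsModSolution (p : ℕ) (D : Finset ℕ) (ℓ : ℕ) (u : ℕ → ℕ) : Prop :=
  (∀ d, d ∉ D → u d = 0) ∧ (∀ d, u d ≤ p ^ ℓ - 1) ∧
  (p ^ ℓ - 1) ∣ ∑ d ∈ D, d * u d ∧ 0 < ∑ d ∈ D, d * u d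

/-- The `p`-weight of a solution: the sum of the base-`p` digit sums of its entries. -/
def solWeight (p : ℕ) (D : Finset ℕ) (u : ℕ → ℕ) : ℕ :=
  ∑ d ∈ D, (Nat.digits p (u d)).sum

/-- The set of densities `weight/(ℓ(p−1))` of solutions of all lengths `ℓ ≥ 1`. -/
def densitySet (p : ℕ) (D : Finset ℕ) : Set ℝ :=
  {x | ∃ ℓ u, 0 < ℓ ∧ IsModSolution p D ℓ u ∧
    x = (solWeight p D u : ℝ) / (ℓ * (p - 1))}


namespace Stmt12Aux

/-- One cyclic rotation of the length-`ℓ` base-`p` digit string. -/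
def rot (p ℓ x : ℕ) : ℕ := x / p + (x % p) * p ^ (ℓ - 1)

lemma p_mul_rot (p ℓ x : ℕ) (hp : 1 ≤ p) (hℓ : 1 ≤ ℓ) :
    p * rot p ℓ x = x + (x % p) * (p ^ ℓ - 1) := by
  have hpow : p * p ^ (ℓ - 1) = p ^ ℓ := by
    conv_rhs => rw [show ℓ = (ℓ - 1) + 1 by omega]
    ring
  obtain ⟨c, hc⟩ : ∃ c, p ^ ℓ = c + 1 :=
    ⟨p ^ ℓ - 1, by have := Nat.one_le_pow ℓ p (by omega); omega⟩
  have hdm : p * (x / p) + x % p = x := Nat.div_add_mod x p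
  unfold rot
  rw [Nat.mul_add, ← Nat.mul_assoc, Nat.mul_comm p (x % p), Nat.mul_assoc,
    hpow, hc, Nat.add_sub_cancel, Nat.mul_add, Nat.mul_one]
  omega

lemma rot_lt (p ℓ x : ℕ) (hp : 1 ≤ p) (hℓ : 1 ≤ ℓ) (hx : x < p ^ ℓ) :
    rot p ℓ x < p ^ ℓ := by
  have h1 : 1 ≤ p ^ ℓ := Nat.one_le_pow ℓ p (by omega)
  have hkey := p_mul_rot p ℓ x hp hℓ
  have hmod : x % p ≤ p - 1 := by
    have := Nat.mod_lt x (show 0 < p by omega); omega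
  have hb1 : (x % p) * (p ^ ℓ - 1) ≤ (p - 1) * (p ^ ℓ - 1) :=
    Nat.mul_le_mul_right _ hmod
  have h2 : (p ^ ℓ - 1) + (p - 1) * (p ^ ℓ - 1) = p * (p ^ ℓ - 1) := by
    have : p = 1 + (p - 1) := by omega
    calc (p ^ ℓ - 1) + (p - 1) * (p ^ ℓ - 1) = (1 + (p - 1)) * (p ^ ℓ - 1) := by
          rw [Nat.add_mul, Nat.one_mul]
      _ = p * (p ^ ℓ - 1) := by rw [← this]
  have hle : p * rot p ℓ x ≤ p * (p ^ ℓ - 1) := by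
    rw [hkey, ← h2]
    omega
  have := Nat.le_of_mul_le_mul_left hle (show 0 < p by omega)
  omega

lemma rot_iter (p ℓ : ℕ) (hp : 1 ≤ p) :
    ∀ i, i ≤ ℓ → ∀ x, (rot p ℓ)^[i] x = x / p ^ i + (x % p ^ i) * p ^ (ℓ - i) := by
  intro i
  induction i with
  | zero => intro _ x; simp [Nat.mod_one]
  | succ n ih =>
    intro hn x
    rw [Function.iterate_succ_apply', ih (by omega) x]
    set A := x / p ^ n with hA
    set B := x % p ^ n with hB
    have hexp : p ^ (ℓ - n) = p ^ (ℓ - n - 1) * p := by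
      rw [← pow_succ]; congr 1; omega
    have hy : A + B * p ^ (ℓ - n) = A + B * p ^ (ℓ - n - 1) * p := by
      rw [hexp, Nat.mul_assoc]
    unfold rot
    rw [hy]
    have hmod : (A + B * p ^ (ℓ - n - 1) * p) % p = A % p := by
      simp [Nat.add_mul_mod_self_right]
    have hdiv : (A + B * p ^ (ℓ - n - 1) * p) / p = A / p + B * p ^ (ℓ - n - 1) := by
      rw [Nat.add_mul_div_right _ _ (show 0 < p by omega)]
    rw [hmod, hdiv]
    have hAdiv : A / p = x / p ^ (n + 1) := by
      rw [hA, Nat.div_div_eq_div_mul, ← pow_succ]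
    have hmodsucc : x % p ^ (n + 1) = B + p ^ n * (A % p) := Nat.mod_pow_succ
    rw [hAdiv, hmodsucc, Nat.add_mul, Nat.add_assoc]
    congr 1
    have e1 : ℓ - n - 1 = ℓ - (n + 1) := by omega
    have e2 : p ^ n * (A % p) * p ^ (ℓ - (n + 1)) = A % p * p ^ (ℓ - 1) := by
      rw [Nat.mul_comm (p ^ n) (A % p), Nat.mul_assoc, ← pow_add]
      congr 2
      omega
    rw [e1, e2]

lemma rot_iter_self (p ℓ x : ℕ) (hp : 1 ≤ p) (hx : x < p ^ ℓ) :
    (rot p ℓ)^[ℓ] x = x := by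
  rw [rot_iter p ℓ hp ℓ le_rfl x, Nat.div_eq_of_lt hx, Nat.mod_eq_of_lt hx]
  simp

lemma rot_iter_mod (p ℓ x i : ℕ) (hp : 1 ≤ p) (hi : i < ℓ) :
    (rot p ℓ)^[i] x % p = x / p ^ i % p := by
  rw [rot_iter p ℓ hp i (by omega) x]
  have hexp : p ^ (ℓ - i) = p ^ (ℓ - i - 1) * p := by
    rw [← pow_succ]; congr 1; omega
  rw [hexp, ← Nat.mul_assoc, Nat.add_mul_mod_self_right]

lemma digits_sum_eq (p : ℕ) (hp : 2 ≤ p) :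
    ∀ ℓ x, x < p ^ ℓ → (Nat.digits p x).sum = ∑ i ∈ Finset.range ℓ, x / p ^ i % p := by
  intro ℓ
  induction ℓ with
  | zero =>
    intro x hx
    have : x = 0 := by simpa using hx
    subst this
    simp
  | succ n ih =>
    intro x hx
    rcases Nat.eq_zero_or_pos x with h0 | h0
    · subst h0; simp
    · rw [Nat.digits_def' (by omega : 1 < p) h0]
      rw [Finset.sum_range_succ']
      simp only [pow_zero, Nat.div_one]
      have hxp : x / p < p ^ n := by
        rw [Nat.div_lt_iff_lt_mul (by omega : 0 < p)]
        calc x < p ^ (n + 1) := hx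
        _ = p ^ n * p := by ring
      rw [List.sum_cons, ih (x / p) hxp]
      have : ∀ i, x / p ^ (i + 1) % p = x / p / p ^ i % p := by
        intro i
        rw [Nat.div_div_eq_div_mul, ← pow_succ']
      rw [Nat.add_comm]
      congr 1
      exact Finset.sum_congr rfl fun i _ => (this i).symm

lemma digits_sum_pos (p x : ℕ) (hp : 2 ≤ p) (hx : 0 < x) :
    0 < (Nat.digits p x).sum := by
  induction x using Nat.strong_induction_on with
  | _ x ih =>
    rw [Nat.digits_def' (by omega : 1 < p) hx, List.sum_cons]
    rcases Nat.eq_zero_or_pos (x / p) with h' | h'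
    · have hd := Nat.div_add_mod x p
      rw [h', Nat.mul_zero, Nat.zero_add] at hd
      omega
    · have := ih (x / p) (Nat.div_lt_self hx (by omega)) h'
      omega

lemma keyK (p a b k : ℤ) (hp : 5 ≤ p) (ha : 1 ≤ a) (hb : 1 ≤ b)
    (h : p * a - b ≤ (p - 2) * k) : 2 + a - b ≤ k := by
  by_contra hc
  push_neg at hc
  have hk : k ≤ 1 + a - b := by omega
  have h2 : (p - 2) * k ≤ (p - 2) * (1 + a - b) :=
    mul_le_mul_of_nonneg_left hk (by omega)
  nlinarith [mul_nonneg (show (0:ℤ) ≤ p - 3 by omega) (show (0:ℤ) ≤ b - 1 by omega)]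


theorem weight_ge (p ℓ : ℕ) (hp : p.Prime) (hp5 : 5 ≤ p) (hl : 0 < ℓ)
    (u : ℕ → ℕ) (h : IsModSolution p (Finset.Icc 1 (p - 2)) ℓ u) :
    2 * ℓ ≤ solWeight p (Finset.Icc 1 (p - 2)) u := by
  set D := Finset.Icc 1 (p - 2) with hD
  obtain ⟨hsupp, hub, hdvd0, hpos0⟩ := h
  set N := p ^ ℓ - 1 with hN
  have hp1 : 1 ≤ p := by omega
  have hpowp : p ≤ p ^ ℓ := Nat.le_self_pow (by omega) p
  have hNpos : 0 < N := by omega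
  have hu_lt : ∀ d, u d < p ^ ℓ := fun d => by have := hub d; omega
  set v : ℕ → ℕ → ℕ := fun d i => (rot p ℓ)^[i] (u d) with hv
  have hv_lt : ∀ d i, v d i < p ^ ℓ := by
    intro d i
    induction i with
    | zero => exact hu_lt d
    | succ n ih =>
      have : v d (n + 1) = rot p ℓ (v d n) := Function.iterate_succ_apply' _ _ _
      rw [this]
      exact rot_lt p ℓ _ hp1 hl ih
  have hvrec : ∀ d i, p * v d (i + 1) = v d i + (v d i % p) * N := by
    intro d i
    have h1 : v d (i + 1) = rot p ℓ (v d i) := Function.iterate_succ_apply' _ _ _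
    rw [h1, p_mul_rot p ℓ _ hp1 hl]
  set S : ℕ → ℕ := fun i => ∑ d ∈ D, d * v d i with hS
  set c : ℕ → ℕ := fun i => ∑ d ∈ D, d * (v d i % p) with hc
  set k : ℕ → ℕ := fun i => ∑ d ∈ D, (v d i % p) with hk
  have hSrec : ∀ i, p * S (i + 1) = S i + N * c i := by
    intro i
    calc p * S (i + 1) = ∑ d ∈ D, d * (p * v d (i + 1)) := by
          rw [Finset.mul_sum]; exact Finset.sum_congr rfl fun d _ => by ring
      _ = ∑ d ∈ D, (d * v d i + N * (d * (v d i % p))) := by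
          exact Finset.sum_congr rfl fun d _ => by rw [hvrec d i]; ring
      _ = S i + N * c i := by
          rw [Finset.sum_add_distrib, ← Finset.mul_sum]
  have hcop : (N : ℕ).Coprime p := by
    have hnd : ¬ p ∣ N := by
      intro hd
      have h1 : p ∣ p ^ ℓ := dvd_pow_self p (by omega)
      have h2 : p ∣ 1 := by
        have h3 := Nat.dvd_sub h1 hd
        rw [show p ^ ℓ - N = 1 by omega] at h3
        exact h3
      have := Nat.le_of_dvd one_pos h2
      omega
    exact Nat.Coprime.symm ((Nat.Prime.coprime_iff_not_dvd hp).mpr hnd)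
  have hSprop : ∀ i, N ∣ S i ∧ 0 < S i := by
    intro i
    induction i with
    | zero =>
      constructor
      · simpa [hS, hv] using hdvd0
      · simpa [hS, hv] using hpos0
    | succ n ih =>
      have hrec := hSrec n
      have hdvd : N ∣ p * S (n + 1) := by
        rw [hrec]; exact Nat.dvd_add ih.1 (Dvd.intro _ rfl)
      refine ⟨hcop.dvd_of_dvd_mul_left hdvd, ?_⟩
      rcases Nat.eq_zero_or_pos (S (n + 1)) with h0 | h0
      · exfalso
        rw [h0, Nat.mul_zero] at hrec
        have := ih.2
        omega
      · exact h0
  set m : ℕ → ℕ := fun i => S i / N with hm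
  have hSm : ∀ i, S i = N * m i := fun i => (Nat.mul_div_cancel' (hSprop i).1).symm
  have hm1 : ∀ i, 1 ≤ m i := by
    intro i
    rcases Nat.eq_zero_or_pos (m i) with h0 | h0
    · exfalso
      have := hSm i
      rw [h0, Nat.mul_zero] at this
      have := (hSprop i).2
      omega
    · exact h0
  have hmrec : ∀ i, p * m (i + 1) = m i + c i := by
    intro i
    have hr := hSrec i
    rw [hSm i, hSm (i + 1)] at hr
    have h2 : N * (p * m (i + 1)) = N * (m i + c i) := by
      calc N * (p * m (i + 1)) = p * (N * m (i + 1)) := by ring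
        _ = N * m i + N * c i := hr
        _ = N * (m i + c i) := by ring
    exact Nat.eq_of_mul_eq_mul_left hNpos h2
  have hck : ∀ i, c i ≤ (p - 2) * k i := by
    intro i
    rw [hc, hk, Finset.mul_sum]
    apply Finset.sum_le_sum
    intro d hd
    have hd2 : d ≤ p - 2 := (Finset.mem_Icc.mp hd).2
    exact Nat.mul_le_mul_right _ hd2
  have hkey : ∀ i, 2 + m (i + 1) ≤ k i + m i := by
    intro i
    have hcast : ((p : ℤ) - 2) = ((p - 2 : ℕ) : ℤ) := by
      have : (2 : ℕ) ≤ p := by omega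
      push_cast [this]
      ring
    have hhyp : (p : ℤ) * m (i + 1) - m i ≤ ((p : ℤ) - 2) * k i := by
      have h1 := hmrec i
      zify at h1
      have h2 : ((c i : ℕ) : ℤ) ≤ (((p - 2) * k i : ℕ) : ℤ) := by exact_mod_cast hck i
      push_cast at h2
      rw [hcast]
      push_cast
      linarith
    have hK := keyK (p : ℤ) (m (i + 1)) (m i) (k i) (by exact_mod_cast hp5)
      (by exact_mod_cast hm1 (i + 1)) (by exact_mod_cast hm1 i) hhyp
    have : (2 : ℤ) + m (i + 1) ≤ k i + m i := by linarith
    exact_mod_cast this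
  have hsum : ∑ i ∈ Finset.range ℓ, (2 + m (i + 1)) ≤ ∑ i ∈ Finset.range ℓ, (k i + m i) :=
    Finset.sum_le_sum fun i _ => hkey i
  rw [Finset.sum_add_distrib, Finset.sum_add_distrib] at hsum
  have hconst : ∑ _i ∈ Finset.range ℓ, 2 = 2 * ℓ := by
    simp [Finset.sum_const, Finset.card_range, Nat.mul_comm]
  have hshift : ∑ i ∈ Finset.range ℓ, m (i + 1) + m 0 = ∑ i ∈ Finset.range ℓ, m i + m ℓ := by
    calc ∑ i ∈ Finset.range ℓ, m (i + 1) + m 0 = ∑ i ∈ Finset.range (ℓ + 1), m i :=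
          (Finset.sum_range_succ' m ℓ).symm
      _ = ∑ i ∈ Finset.range ℓ, m i + m ℓ := Finset.sum_range_succ m ℓ
  have hml : m ℓ = m 0 := by
    have hvS : S ℓ = S 0 := by
      apply Finset.sum_congr rfl
      intro d _
      have h1 : v d ℓ = u d := rot_iter_self p ℓ (u d) hp1 (hu_lt d)
      have h2 : v d 0 = u d := rfl
      rw [h1, h2]
    rw [hm]
    simp only [hvS]
  have hw : solWeight p D u = ∑ i ∈ Finset.range ℓ, k i := by
    rw [solWeight]
    calc ∑ d ∈ D, (Nat.digits p (u d)).sum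
        = ∑ d ∈ D, ∑ i ∈ Finset.range ℓ, (u d / p ^ i % p) :=
          Finset.sum_congr rfl fun d _ => digits_sum_eq p (by omega) ℓ (u d) (hu_lt d)
      _ = ∑ i ∈ Finset.range ℓ, ∑ d ∈ D, (u d / p ^ i % p) := Finset.sum_comm
      _ = ∑ i ∈ Finset.range ℓ, k i :=
          Finset.sum_congr rfl fun i hi => Finset.sum_congr rfl fun d _ =>
            (rot_iter_mod p ℓ (u d) i hp1 (Finset.mem_range.mp hi)).symm
  rw [hconst] at hsum
  rw [hw]
  omega


end Stmt12Aux

theorem weight_ge_two (p : ℕ) (hp : p.Prime) (hp5 : 5 ≤ p) (u : ℕ → ℕ)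
    (hsupp : ∀ d, d ∉ Finset.Icc 1 (p - 2) → u d = 0)
    (hdvd : (p - 1) ∣ ∑ d ∈ Finset.Icc 1 (p - 2), d * u d)
    (hpos : 0 < ∑ d ∈ Finset.Icc 1 (p - 2), d * u d) :
    2 ≤ solWeight p (Finset.Icc 1 (p - 2)) u := by
  set D := Finset.Icc 1 (p - 2) with hD
  by_contra hlt
  push_neg at hlt
  have hw1 : solWeight p D u ≤ 1 := by omega
  have hmodp : p % (p - 1) = 1 := by
    obtain ⟨q, hq⟩ : ∃ q, p = q + 2 := ⟨p - 2, by omega⟩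
    subst hq
    rw [show q + 2 - 1 = q + 1 by omega, show q + 2 = (q + 1) + 1 by omega,
      Nat.add_mod_left]
    exact Nat.mod_eq_of_lt (by omega)
  have hmod : ∀ n : ℕ, n ≡ (Nat.digits p n).sum [MOD (p - 1)] :=
    Nat.modEq_digits_sum (p - 1) p hmodp
  set T := ∑ d ∈ D, d * (Nat.digits p (u d)).sum with hT
  have hTdvd : (p - 1) ∣ T := by
    have hsummod : ∀ s : Finset ℕ,
        (∑ d ∈ s, d * u d) ≡ (∑ d ∈ s, d * (Nat.digits p (u d)).sum) [MOD (p - 1)] := by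
      intro s
      induction s using Finset.induction_on with
      | empty => rfl
      | insert _ _ hx ih =>
        rw [Finset.sum_insert hx, Finset.sum_insert hx]
        exact Nat.ModEq.add ((hmod _).mul_left _) ih
    have h0 : (∑ d ∈ D, d * u d) ≡ 0 [MOD (p - 1)] :=
      (Nat.modEq_zero_iff_dvd).mpr hdvd
    exact (Nat.modEq_zero_iff_dvd).mp ((hsummod D).symm.trans h0)
  have hTle : T ≤ (p - 2) * solWeight p D u := by
    rw [hT, solWeight, Finset.mul_sum]
    apply Finset.sum_le_sum
    intro d hd
    exact Nat.mul_le_mul_right _ (Finset.mem_Icc.mp hd).2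
  have hT0 : T = 0 := by
    rcases Nat.eq_zero_or_pos T with h0 | h0
    · exact h0
    · exfalso
      have hge := Nat.le_of_dvd h0 hTdvd
      have hle2 : T ≤ p - 2 := le_trans hTle (by
        calc (p - 2) * solWeight p D u ≤ (p - 2) * 1 := Nat.mul_le_mul_left _ hw1
          _ = p - 2 := by omega)
      omega
  have hu0 : ∀ d ∈ D, u d = 0 := by
    intro d hd
    have hterm : d * (Nat.digits p (u d)).sum = 0 :=
      Finset.sum_eq_zero_iff.mp hT0 d hd
    have hd1 : 1 ≤ d := (Finset.mem_Icc.mp hd).1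
    have hs0 : (Nat.digits p (u d)).sum = 0 := by
      rcases Nat.mul_eq_zero.mp hterm with h | h
      · omega
      · exact h
    by_contra hne
    have := Stmt12Aux.digits_sum_pos p (u d) (by omega) (Nat.pos_of_ne_zero hne)
    omega
  have : ∑ d ∈ D, d * u d = 0 := Finset.sum_eq_zero fun d hd => by rw [hu0 d hd, Nat.mul_zero]
  omega

/-- For a prime `p ≥ 5` and `D = {1,…,p−2}`: every solution of
`∑ d·u_d ≡ 0 (mod p−1)`, `∑ d·u_d > 0` has `p`-weight at least `2`, and
consequently the `p`-density of `D` equals `2/(p−1)` (as a minimum). -/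
theorem stmt_12 (p : ℕ) (hp : p.Prime) (hp5 : 5 ≤ p) :
    (∀ u : ℕ → ℕ, (∀ d, d ∉ Finset.Icc 1 (p - 2) → u d = 0) →
      (p - 1) ∣ ∑ d ∈ Finset.Icc 1 (p - 2), d * u d →
      0 < ∑ d ∈ Finset.Icc 1 (p - 2), d * u d →
      2 ≤ solWeight p (Finset.Icc 1 (p - 2)) u) ∧
    IsLeast (densitySet p (Finset.Icc 1 (p - 2))) (2 / ((p : ℝ) - 1)) := by
  constructor
  · intro u h1 h2 h3
    exact weight_ge_two p hp hp5 u h1 h2 h3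
  · constructor
    · -- membership: the solution u_1 = u_{p-2} = 1 with ℓ = 1
      set D := Finset.Icc 1 (p - 2) with hD
      set u : ℕ → ℕ := fun d => if d = 1 then 1 else if d = p - 2 then 1 else 0 with hu
      have hne : (1 : ℕ) ≠ p - 2 := by omega
      have h1mem : 1 ∈ D := Finset.mem_Icc.mpr ⟨le_rfl, by omega⟩
      have h2mem : p - 2 ∈ D := Finset.mem_Icc.mpr ⟨by omega, le_rfl⟩
      have hpair : ∀ F : ℕ → ℕ, (∀ d, d ≠ 1 → d ≠ p - 2 → F d = 0) →
          ∑ d ∈ D, F d = F 1 + F (p - 2) := by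
        intro F hF
        have hsub : ({1, p - 2} : Finset ℕ) ⊆ D := by
          intro x hx
          rcases Finset.mem_insert.mp hx with h | h
          · subst h; exact h1mem
          · rw [Finset.mem_singleton.mp h]; exact h2mem
        have := Finset.sum_subset hsub (fun x _ hx => by
          have hx1 : x ≠ 1 := fun h => hx (by rw [h]; exact Finset.mem_insert_self _ _)
          have hx2 : x ≠ p - 2 := fun h => hx (by rw [h]; simp)
          exact hF x hx1 hx2)
        rw [← this, Finset.sum_pair hne]
      have hu1 : u 1 = 1 := by simp [hu]
      have hu2 : u (p - 2) = 1 := by simp [hu, hne.symm]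
      have husum : ∑ d ∈ D, d * u d = p - 1 := by
        rw [hpair (fun d => d * u d) (fun d h1 h2 => by simp [hu, h1, h2])]
        rw [hu1, hu2]
        omega
      have hsol : IsModSolution p D 1 u := by
        refine ⟨?_, ?_, ?_, ?_⟩
        · intro d hd
          have hd1 : d ≠ 1 := fun h => hd (h ▸ h1mem)
          have hd2 : d ≠ p - 2 := fun h => hd (h ▸ h2mem)
          simp [hu, hd1, hd2]
        · intro d
          rw [pow_one]
          simp only [hu]
          split
          · omega
          · split <;> omega
        · rw [pow_one, husum]
        · rw [husum]; omega
      have hweight : solWeight p D u = 2 := by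
        rw [solWeight, hpair (fun d => (Nat.digits p (u d)).sum)
          (fun d h1 h2 => by simp [hu, h1, h2])]
        rw [hu1, hu2, Nat.digits_of_lt p 1 one_ne_zero (by omega)]
        simp
      refine ⟨1, u, one_pos, hsol, ?_⟩
      rw [hweight]
      norm_num
    · intro x hx
      obtain ⟨ℓ, u, hl, hsol, hxeq⟩ := hx
      have hwge := Stmt12Aux.weight_ge p ℓ hp hp5 hl u hsol
      subst hxeq
      have hp1R : (0 : ℝ) < (p : ℝ) - 1 := by
        have : (5 : ℝ) ≤ (p : ℝ) := by exact_mod_cast hp5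
        linarith
      have hlR : (0 : ℝ) < (ℓ : ℝ) := by exact_mod_cast hl
      rw [div_le_div_iff₀ hp1R (by positivity)]
      have hwR : (2 : ℝ) * (ℓ : ℝ) ≤ (solWeight p (Finset.Icc 1 (p - 2)) u : ℝ) := by
        exact_mod_cast hwge
      nlinarith [hwR, hp1R]
end

section
/- Let p be an odd prime and n ≥ 2. The p-density of the set D = { i : 1 ≤ i ≤ p^{n+1} − p − 1, gcd(i,p) = 1 } equals 1/(n(p−1)). -/
namespace Stmt15Aux





lemma geom (x K : ℕ) (hx : 1 ≤ x) :
    (x - 1) * ∑ k ∈ Finset.range K, x ^ k = x ^ K - 1 := by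
  induction K with
  | zero => simp
  | succ K ih =>
    rw [Finset.sum_range_succ, Nat.mul_add, ih]
    have h1 : 1 ≤ x ^ K := Nat.one_le_pow _ _ (by omega)
    have h2 : (x - 1) * x ^ K = x ^ (K+1) - x ^ K := by
      rw [Nat.sub_mul, pow_succ, one_mul, mul_comm]
    have h3 : x ^ K ≤ x ^ (K+1) := Nat.pow_le_pow_right (by omega) (by omega)
    omega

lemma two_mul_add_one_le_three_pow (m : ℕ) : 2 * m + 1 ≤ 3 ^ m := by
  induction m with
  | zero => norm_num
  | succ m ih =>
    have : 3 ^ m ≥ 1 := Nat.one_le_pow _ _ (by norm_num)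
    calc 2 * (m+1) + 1 = (2*m+1) + 2 := by ring
    _ ≤ 3 ^ m + 2 * 3 ^ m := by omega
    _ = 3 ^ (m+1) := by ring

lemma log_mul_pow (p : ℕ) (hp : 1 < p) (x k : ℕ) (hx : x ≠ 0) :
    Nat.log p (x * p ^ k) = Nat.log p x + k := by
  induction k with
  | zero => simp
  | succ k ih =>
    have hxk : x * p ^ k ≠ 0 := by positivity
    rw [pow_succ, ← mul_assoc, Nat.log_mul_base hp hxk, ih]; omega

lemma filter_split_sum (l : List (ℕ × ℕ)) (q : ℕ × ℕ → Bool) (f : ℕ × ℕ → ℕ) :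
    ((l.filter q).map f).sum + ((l.filter (fun x => ! q x)).map f).sum = (l.map f).sum := by
  induction l with
  | nil => simp
  | cons a l ih =>
    by_cases h : q a = true <;>
      simp only [List.filter_cons, h, Bool.not_true, Bool.not_false, if_true, if_false,
        List.map_cons, List.sum_cons, Bool.not_eq_true'] <;> simp [h] <;> omega

lemma filter_split_len (l : List (ℕ × ℕ)) (q : ℕ × ℕ → Bool) :
    (l.filter q).length + (l.filter (fun x => ! q x)).length = l.length := by
  induction l with
  | nil => simp
  | cons a l ih =>
    by_cases h : q a = true <;>
      simp only [List.filter_cons, h, Bool.not_true, Bool.not_false, if_true, if_false,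
        Bool.not_eq_true'] <;> simp [h] <;> omega

lemma exists_min_snd (l : List (ℕ × ℕ)) (hl : l ≠ []) : ∃ x ∈ l, ∀ y ∈ l, x.2 ≤ y.2 := by
  induction l with
  | nil => simp at hl
  | cons a l ih =>
    rcases eq_or_ne l [] with rfl | hne
    · exact ⟨a, by simp⟩
    · obtain ⟨x, hx, hmin⟩ := ih hne
      rcases le_or_gt a.2 x.2 with h | h
      · exact ⟨a, by simp, by
          intro y hy
          rcases List.mem_cons.mp hy with rfl | hy
          · exact le_rfl
          · exact le_trans h (hmin y hy)⟩
      · exact ⟨x, by simp [hx], by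
          intro y hy
          rcases List.mem_cons.mp hy with rfl | hy
          · omega
          · exact hmin y hy⟩



def fval (p : ℕ) : ℕ × ℕ → ℕ := fun x => x.1 * p ^ x.2

lemma hppow (p n : ℕ) (hp : 3 ≤ p) (hn : 1 ≤ n) : p + 1 ≤ p ^ (n + 1) := by
  calc p + 1 ≤ 3 * p := by omega
  _ ≤ p * p := Nat.mul_le_mul_right p hp
  _ = p ^ 2 := (sq p).symm
  _ ≤ p ^ (n + 1) := Nat.pow_le_pow_right (by omega) (by omega)

/-- a term `d·p^j` with `d ≤ B` and `j + n + 1 ≤ L` is `< p^L - 1`. -/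
lemma smallterm (p n L d j : ℕ) (hp : 3 ≤ p) (hn : 1 ≤ n)
    (hd : d ≤ p ^ (n + 1) - p - 1) (hj : j + n + 1 ≤ L) :
    d * p ^ j < p ^ L - 1 := by
  have hB := hppow p n hp hn
  have e1 : (p ^ (n + 1) - p - 1) * p ^ j + (p + 1) * p ^ j = p ^ (n + 1 + j) := by
    rw [← Nat.add_mul]
    have h : p ^ (n + 1) - p - 1 + (p + 1) = p ^ (n + 1) := by omega
    rw [h, ← pow_add]
  have e2 : p + 1 ≤ (p + 1) * p ^ j :=
    Nat.le_mul_of_pos_right _ (Nat.pow_pos (by omega))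
  have e3 : d * p ^ j ≤ (p ^ (n + 1) - p - 1) * p ^ j := Nat.mul_le_mul_right _ hd
  have e4 : p ^ (n + 1 + j) ≤ p ^ L := Nat.pow_le_pow_right (by omega) (by omega)
  have e5 : 1 ≤ p ^ L := Nat.one_le_pow _ _ (by omega)
  omega

lemma km1 (p n : ℕ) (hp : 3 ≤ p) (hn : 1 ≤ n) : ∀ k : ℕ, k + 1 ≤ p ^ (n * k) := by
  intro k
  induction k with
  | zero => simp
  | succ k ih =>
    have h1 : n * (k + 1) = n * k + n := by ring
    have h2 : p ^ (n * k + n) = p ^ (n * k) * p ^ n := pow_add p _ _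
    have h3 : 2 ≤ p ^ n := by
      calc 2 ≤ p := by omega
      _ = p ^ 1 := (pow_one p).symm
      _ ≤ p ^ n := Nat.pow_le_pow_right (by omega) hn
    have h4 : p ^ (n * k) * 2 ≤ p ^ (n * k) * p ^ n := Nat.mul_le_mul_left _ h3
    have h5 : 1 ≤ p ^ (n * k) := Nat.one_le_pow _ _ (by omega)
    rw [h1, h2]
    omega


lemma peel (p n : ℕ) (hp : 3 ≤ p) (hn : 2 ≤ n) :
    ∀ L : ℕ, ∀ units : List (ℕ × ℕ), ∀ g : ℕ,
      (∀ x ∈ units, 1 ≤ x.1 ∧ x.1 ≤ p ^ (n + 1) - p - 1) →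
      g + (units.map (fval p)).sum = p ^ L - 1 →
      L ≤ n * units.length + Nat.log p (g + 1) + n := by
  intro L
  induction L using Nat.strong_induction_on with
  | _ L IH =>
  intro units g hu heq
  by_cases hLn : L ≤ n
  · exact le_trans hLn (Nat.le_add_left _ _)
  push_neg at hLn
  have hp1 : 1 < p := by omega
  have hpn1 : p + 1 ≤ p ^ (n + 1) := hppow p n hp (by omega)
  set f := fval p with hf
  set S := units.filter (fun x => decide (x.2 < n)) with hS
  set S' := units.filter (fun x => ! decide (x.2 < n)) with hS'
  have hsplitsum : (S.map f).sum + (S'.map f).sum = (units.map f).sum :=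
    filter_split_sum units _ f
  have hsplitlen : S.length + S'.length = units.length :=
    filter_split_len units _
  have hmemS : ∀ x ∈ S, x ∈ units ∧ x.2 < n := by
    intro x hx
    rw [hS, List.mem_filter] at hx
    simpa using hx
  have hmemS' : ∀ x ∈ S', x ∈ units ∧ n ≤ x.2 := by
    intro x hx
    rw [hS', List.mem_filter] at hx
    simp only [Bool.not_eq_true', decide_eq_false_iff_not, Nat.not_lt] at hx
    exact hx
  have hpLpos : 1 ≤ p ^ L := Nat.one_le_pow _ _ (by omega)
  set A := g + 1 + (S.map f).sum with hA
  have hAeq : A + (S'.map f).sum = p ^ L := by omega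
  have hdvdS' : p ^ n ∣ (S'.map f).sum := by
    apply List.dvd_sum
    intro y hy
    simp only [List.mem_map] at hy
    obtain ⟨x, hx, rfl⟩ := hy
    obtain ⟨-, hxn⟩ := hmemS' x hx
    exact Dvd.dvd.mul_left (pow_dvd_pow p hxn) x.1
  have hdvdA : p ^ n ∣ A := by
    have h1 : p ^ n ∣ p ^ L := pow_dvd_pow p (by omega)
    have h2 : A = p ^ L - (S'.map f).sum := by omega
    rw [h2]; exact Nat.dvd_sub h1 hdvdS'
  set A' := A / p ^ n with hA'
  have hA'mul : A' * p ^ n = A := Nat.div_mul_cancel hdvdA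
  have hpn0 : 0 < p ^ n := Nat.pow_pos (by omega)
  have hA'pos : 0 < A' := by
    rcases Nat.eq_zero_or_pos A' with h | h
    · rw [h, zero_mul] at hA'mul; omega
    · exact h
  set S'' := S'.map (fun x => (x.1, x.2 - n)) with hS''
  have hS''sum : p ^ n * (S''.map f).sum = (S'.map f).sum := by
    rw [hS'', List.map_map, ← List.sum_map_mul_left]
    congr 1
    apply List.map_congr_left
    intro x hx
    obtain ⟨-, hxn⟩ := hmemS' x hx
    show p ^ n * (x.1 * p ^ (x.2 - n)) = x.1 * p ^ x.2
    rw [← mul_assoc, mul_comm (p ^ n), mul_assoc, ← pow_add]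
    congr 2
    omega
  have hnewEq : A' + (S''.map f).sum = p ^ (L - n) := by
    have h1 : (A' + (S''.map f).sum) * p ^ n = p ^ (L - n) * p ^ n := by
      rw [Nat.add_mul, hA'mul, ← pow_add]
      have h2 : L - n + n = L := by omega
      rw [h2, mul_comm ((S''.map f).sum)]
      omega
    exact Nat.eq_of_mul_eq_mul_right hpn0 h1
  have hpLn : 1 ≤ p ^ (L - n) := Nat.one_le_pow _ _ (by omega)
  have hrec : L - n ≤ n * S''.length + Nat.log p (A' - 1 + 1) + n := by
    apply IH (L - n) (by omega) S'' (A' - 1)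
    · intro y hy
      rw [hS''] at hy
      simp only [List.mem_map] at hy
      obtain ⟨x, hx, rfl⟩ := hy
      exact hu x (hmemS' x hx).1
    · omega
  have hA'1 : A' - 1 + 1 = A' := by omega
  rw [hA'1, List.length_map] at hrec
  -- hrec : L - n ≤ n * S'.length + Nat.log p A' + n
  have hgpos : g + 1 < p ^ (Nat.log p (g + 1) + 1) := Nat.lt_pow_succ_log_self hp1 (g + 1)
  set ψ := Nat.log p (g + 1) with hψ
  -- case analysis on S.length
  rcases Nat.lt_or_ge S.length 2 with hs2 | hs2
  · rcases Nat.lt_or_ge S.length 1 with hs1 | hs1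
    · -- s = 0
      have hS0 : S = [] := List.length_eq_zero_iff.mp (by omega)
      have hsum0 : (S.map f).sum = 0 := by rw [hS0]; simp
      have hAg : A = (g + 1) := by omega
      have hlog : ψ = Nat.log p A' + n := by
        rw [hψ, ← hAg, ← hA'mul]
        exact log_mul_pow p hp1 A' n (by omega)
      have hlen : n * units.length = n * S'.length := by
        have h5 : S'.length = units.length := by
          have h6 := hsplitlen
          rw [hS0] at h6
          simpa using h6
        rw [h5]
      omega
    · -- s = 1
      have hS1 : ∃ x, S = [x] := List.length_eq_one_iff.mp (by omega)
      obtain ⟨x, hSx⟩ := hS1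
      have hxS : x ∈ S := by rw [hSx]; simp
      obtain ⟨hxu, hxn⟩ := hmemS x hxS
      obtain ⟨hx1, hxB⟩ := hu x hxu
      have hsum1 : (S.map f).sum = x.1 * p ^ x.2 := by rw [hSx]; simp [hf, fval]
      -- p^{x.2} ∣ g+1
      have hdvd1 : p ^ x.2 ∣ g + 1 := by
        have h1 : p ^ x.2 ∣ A := dvd_trans (pow_dvd_pow p (by omega)) hdvdA
        have h2 : p ^ x.2 ∣ x.1 * p ^ x.2 := dvd_mul_left _ _
        have h3 : g + 1 = A - x.1 * p ^ x.2 := by omega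
        rw [h3]; exact Nat.dvd_sub h1 h2
      have heψ : x.2 ≤ ψ := Nat.le_log_of_pow_le hp1 (Nat.le_of_dvd (by omega) hdvd1)
      have hfx : x.1 * p ^ x.2 ≤ (p ^ (n + 1) - p - 1) * p ^ ψ :=
        Nat.mul_le_mul hxB (Nat.pow_le_pow_right (by omega) heψ)
      have E2 : p ^ (ψ + 1) + (p ^ (n + 1) - p - 1) * p ^ ψ + p ^ ψ = p ^ (ψ + n + 1) := by
        have h1 : p ^ (ψ + 1) = p * p ^ ψ := by rw [pow_succ, mul_comm]
        have h2 : p ^ (ψ + n + 1) = p ^ (n + 1) * p ^ ψ := by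
          rw [← pow_add]; congr 1; omega
        have h3 : p * p ^ ψ + (p ^ (n + 1) - p - 1) * p ^ ψ + p ^ ψ
            = (p + (p ^ (n + 1) - p - 1) + 1) * p ^ ψ := by ring
        have h4 : p + (p ^ (n + 1) - p - 1) + 1 = p ^ (n + 1) := by omega
        rw [h1, h2, h3, h4]
      have hψpow : 1 ≤ p ^ ψ := Nat.one_le_pow _ _ (by omega)
      have hAlt : A < p ^ (ψ + n + 1) := by omega
      have E3 : p ^ (ψ + 1) * p ^ n = p ^ (ψ + n + 1) := by
        rw [← pow_add]; congr 1; omega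
      have hA'lt : A' < p ^ (ψ + 1) := by
        rw [hA', Nat.div_lt_iff_lt_mul hpn0, E3]; exact hAlt
      have hlog : Nat.log p A' < ψ + 1 := Nat.log_lt_of_lt_pow (by omega) hA'lt
      have hlen1 : units.length = S'.length + 1 := by
        rw [← hsplitlen, hSx]; simp; omega
      have E4 : n * units.length = n * S'.length + n := by rw [hlen1]; ring
      omega
  · -- s ≥ 2
    have hSne : S ≠ [] := by
      intro h; rw [h] at hs2; simp at hs2
    obtain ⟨x₀, hx₀S, hx₀min⟩ := exists_min_snd S hSne
    obtain ⟨hx₀u, hx₀n⟩ := hmemS x₀ hx₀S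
    obtain ⟨hx₀1, hx₀B⟩ := hu x₀ hx₀u
    obtain ⟨l₁, l₂, hSdec⟩ := List.append_of_mem hx₀S
    have hsumdec : (S.map f).sum = x₀.1 * p ^ x₀.2 + ((l₁ ++ l₂).map f).sum := by
      rw [hSdec]; simp [hf, fval]; ring
    have hlendec : S.length = (l₁ ++ l₂).length + 1 := by
      rw [hSdec]; simp; omega
    -- divisibility for min exponent
    have hdvdmin : p ^ x₀.2 ∣ g + 1 := by
      have h1 : p ^ x₀.2 ∣ A := dvd_trans (pow_dvd_pow p (by omega)) hdvdA
      have h2 : p ^ x₀.2 ∣ (S.map f).sum := by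
        apply List.dvd_sum
        intro y hy
        simp only [List.mem_map] at hy
        obtain ⟨z, hz, rfl⟩ := hy
        exact Dvd.dvd.mul_left (pow_dvd_pow p (hx₀min z hz)) z.1
      have h3 : g + 1 = A - (S.map f).sum := by omega
      rw [h3]; exact Nat.dvd_sub h1 h2
    have heψ : x₀.2 ≤ ψ := Nat.le_log_of_pow_le hp1 (Nat.le_of_dvd (by omega) hdvdmin)
    have hfx : x₀.1 * p ^ x₀.2 ≤ (p ^ (n + 1) - p - 1) * p ^ ψ :=
      Nat.mul_le_mul hx₀B (Nat.pow_le_pow_right (by omega) heψ)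
    -- bound on the rest
    have hrest : ((l₁ ++ l₂).map f).sum ≤ (l₁ ++ l₂).length * (p ^ (n + 1) * p ^ (n - 1)) := by
      have := List.sum_le_card_nsmul ((l₁ ++ l₂).map f) (p ^ (n + 1) * p ^ (n - 1)) ?_
      · simpa [smul_eq_mul] using this
      · intro y hy
        simp only [List.mem_map] at hy
        obtain ⟨z, hz, rfl⟩ := hy
        have hzS : z ∈ S := by
          rw [hSdec]
          rcases List.mem_append.mp hz with h | h
          · exact List.mem_append.mpr (Or.inl h)
          · exact List.mem_append.mpr (Or.inr (List.mem_cons_of_mem _ h))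
        obtain ⟨hzu, hzn⟩ := hmemS z hzS
        obtain ⟨hz1, hzB⟩ := hu z hzu
        show z.1 * p ^ z.2 ≤ p ^ (n + 1) * p ^ (n - 1)
        apply Nat.mul_le_mul (by omega) (Nat.pow_le_pow_right (by omega) (by omega))
    set s := S.length with hsdef
    have hcard : (l₁ ++ l₂).length = s - 1 := by omega
    have hkm1 : s - 1 ≤ p ^ (n * (s - 2)) := by
      have := km1 p n hp (by omega) (s - 2)
      omega
    have hrest2 : ((l₁ ++ l₂).map f).sum ≤ p ^ (n * s) := by
      calc ((l₁ ++ l₂).map f).sum ≤ (s - 1) * (p ^ (n + 1) * p ^ (n - 1)) := by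
            rw [← hcard]; exact hrest
      _ ≤ p ^ (n * (s - 2)) * (p ^ (n + 1) * p ^ (n - 1)) := Nat.mul_le_mul_right _ hkm1
      _ = p ^ (n * (s - 2) + (n + 1 + (n - 1))) := by rw [← pow_add, ← pow_add]
      _ = p ^ (n * s) := by
            congr 1
            have h1 : n * (s - 2) + 2 * n = n * s := by
              have h2 : s - 2 + 2 = s := by omega
              calc n * (s - 2) + 2 * n = n * ((s - 2) + 2) := by ring
              _ = n * s := by rw [h2]
            omega
    have E2 : p ^ (ψ + 1) + (p ^ (n + 1) - p - 1) * p ^ ψ + p ^ ψ = p ^ (ψ + n + 1) := by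
      have h1 : p ^ (ψ + 1) = p * p ^ ψ := by rw [pow_succ, mul_comm]
      have h2 : p ^ (ψ + n + 1) = p ^ (n + 1) * p ^ ψ := by
        rw [← pow_add]; congr 1; omega
      have h3 : p * p ^ ψ + (p ^ (n + 1) - p - 1) * p ^ ψ + p ^ ψ
          = (p + (p ^ (n + 1) - p - 1) + 1) * p ^ ψ := by ring
      have h4 : p + (p ^ (n + 1) - p - 1) + 1 = p ^ (n + 1) := by omega
      rw [h1, h2, h3, h4]
    have hψpow : 1 ≤ p ^ ψ := Nat.one_le_pow _ _ (by omega)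
    -- A < p^(ψ + n*s + 1)
    have hmono1 : p ^ (ψ + n + 1) ≤ p ^ (ψ + n * s - 1) := by
      apply Nat.pow_le_pow_right (by omega)
      have : 2 * n ≤ n * s := by
        calc 2 * n = n * 2 := by ring
        _ ≤ n * s := Nat.mul_le_mul_left _ hs2
      omega
    have hmono2 : p ^ (n * s) ≤ p ^ (ψ + n * s) := Nat.pow_le_pow_right (by omega) (by omega)
    have hmono3 : p ^ (ψ + n * s - 1) ≤ p ^ (ψ + n * s) := Nat.pow_le_pow_right (by omega) (by omega)
    have E5 : p ^ (ψ + n * s + 1) = p * p ^ (ψ + n * s) := by rw [pow_succ, mul_comm]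
    have E6 : 2 * p ^ (ψ + n * s) ≤ p * p ^ (ψ + n * s) := Nat.mul_le_mul_right _ (by omega)
    have hAlt : A < p ^ (ψ + n * s + 1) := by omega
    have E3 : p ^ (ψ + n * (s - 1) + 1) * p ^ n = p ^ (ψ + n * s + 1) := by
      rw [← pow_add]
      congr 1
      have h1 : n * (s - 1) + n = n * s := by
        have h2 : s - 1 + 1 = s := by omega
        calc n * (s - 1) + n = n * ((s - 1) + 1) := by ring
        _ = n * s := by rw [h2]
      omega
    have hA'lt : A' < p ^ (ψ + n * (s - 1) + 1) := by
      rw [hA', Nat.div_lt_iff_lt_mul hpn0, E3]; exact hAlt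
    have hlog : Nat.log p A' < ψ + n * (s - 1) + 1 := Nat.log_lt_of_lt_pow (by omega) hA'lt
    have E7 : n * (s - 1) + n = n * s := by
      have h2 : s - 1 + 1 = s := by omega
      calc n * (s - 1) + n = n * ((s - 1) + 1) := by ring
      _ = n * s := by rw [h2]
    have E8 : n * units.length = n * s + n * S'.length := by
      rw [← hsplitlen]; ring
    omega




lemma pow_one_modEq (p L : ℕ) (hp : 1 ≤ p) : p ^ L ≡ 1 [MOD p ^ L - 1] := by
  have h1 : 1 ≤ p ^ L := Nat.one_le_pow _ _ (by omega)
  exact ((Nat.modEq_iff_dvd' h1).mpr dvd_rfl).symm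

lemma pow_mod_cycle (p L a : ℕ) (hp : 1 ≤ p) (hL : 0 < L) :
    p ^ a ≡ p ^ (a % L) [MOD p ^ L - 1] := by
  conv_lhs => rw [← Nat.div_add_mod a L]
  rw [pow_add, pow_mul]
  calc (p ^ L) ^ (a / L) * p ^ (a % L)
      ≡ 1 ^ (a / L) * p ^ (a % L) [MOD p ^ L - 1] :=
        Nat.ModEq.mul_right _ ((pow_one_modEq p L hp).pow _)
  _ = p ^ (a % L) := by rw [one_pow, one_mul]

lemma list_sum_modEq {α : Type*} (M : ℕ) (l : List α) (f g : α → ℕ)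
    (h : ∀ x ∈ l, f x ≡ g x [MOD M]) :
    (l.map f).sum ≡ (l.map g).sum [MOD M] := by
  induction l with
  | nil => rfl
  | cons a l ih =>
    simp only [List.map_cons, List.sum_cons]
    exact (h a (by simp)).add (ih (fun x hx => h x (by simp [hx])))

lemma sum_range_list {α : Type*} (L : ℕ) (l : List α) (h : ℕ → α → ℕ) :
    ∑ t ∈ Finset.range L, (l.map (h t)).sum
      = (l.map (fun x => ∑ t ∈ Finset.range L, h t x)).sum := by
  induction l with
  | nil => simp
  | cons a l ih => simp [Finset.sum_add_distrib, ih]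

lemma sum_map_add {α : Type*} (l : List α) (u v : α → ℕ) :
    (l.map (fun x => u x + v x)).sum = (l.map u).sum + (l.map v).sum := by
  induction l with
  | nil => simp
  | cons a l ih => simp [ih]; ring

lemma sum_shift_mod (L : ℕ) (hL : 0 < L) (g : ℕ → ℕ) :
    ∀ e, ∑ t ∈ Finset.range L, g ((e + t) % L) = ∑ j ∈ Finset.range L, g j := by
  intro e
  induction e with
  | zero =>
    apply Finset.sum_congr rfl
    intro t ht
    rw [Nat.zero_add, Nat.mod_eq_of_lt (Finset.mem_range.mp ht)]
  | succ e ih =>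
    have key1 : ∑ t ∈ Finset.range (L + 1), g ((e + t) % L)
        = (∑ t ∈ Finset.range L, g ((e + (t + 1)) % L)) + g ((e + 0) % L) :=
      Finset.sum_range_succ' _ _
    have key2 : ∑ t ∈ Finset.range (L + 1), g ((e + t) % L)
        = (∑ t ∈ Finset.range L, g ((e + t) % L)) + g ((e + L) % L) :=
      Finset.sum_range_succ _ _
    have h3 : (e + L) % L = (e + 0) % L := by
      rw [Nat.add_mod_right, Nat.add_zero]
    have h4 : ∑ t ∈ Finset.range L, g ((e + 1 + t) % L)
        = ∑ t ∈ Finset.range L, g ((e + (t + 1)) % L) := by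
      apply Finset.sum_congr rfl
      intro t ht
      congr 2
      omega
    rw [h4]
    rw [h3] at key2
    omega

lemma flat_len {β : Type*} (K : ℕ) (l : List β) (sh : ℕ → β → β) :
    ((List.range K).flatMap (fun k => l.map (sh k))).length = K * l.length := by
  induction K with
  | zero => simp
  | succ K ih =>
    rw [List.range_succ, List.flatMap_append]
    simp only [List.length_append, ih, List.flatMap_cons, List.flatMap_nil, List.append_nil,
      List.length_map]
    ring

lemma flat_sum (p ℓ : ℕ) (l : List (ℕ × ℕ)) (K : ℕ) :
    (((List.range K).flatMap (fun k => l.map (fun x => (x.1, x.2 + k * ℓ)))).map (fval p)).sum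
      = (∑ k ∈ Finset.range K, p ^ (k * ℓ)) * (l.map (fval p)).sum := by
  induction K with
  | zero => simp
  | succ K ih =>
    rw [List.range_succ, List.flatMap_append, List.map_append, List.sum_append, ih,
      Finset.sum_range_succ]
    simp only [List.flatMap_cons, List.flatMap_nil, List.append_nil, List.map_map]
    have h1 : ((l.map ((fval p) ∘ fun x => (x.1, x.2 + K * ℓ)))).sum
        = p ^ (K * ℓ) * (l.map (fval p)).sum := by
      rw [← List.sum_map_mul_left]
      congr 1
      apply List.map_congr_left
      intro x hx
      show x.1 * p ^ (x.2 + K * ℓ) = p ^ (K * ℓ) * (x.1 * p ^ x.2)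
      rw [pow_add]; ring
    rw [h1, Nat.add_mul]

lemma hppow' (p n : ℕ) (hp : 3 ≤ p) (hn : 1 ≤ n) : p + 1 ≤ p ^ (n + 1) := by
  calc p + 1 ≤ 3 * p := by omega
  _ ≤ p * p := Nat.mul_le_mul_right p hp
  _ = p ^ 2 := (sq p).symm
  _ ≤ p ^ (n + 1) := Nat.pow_le_pow_right (by omega) (by omega)

lemma smallterm' (p n L d j : ℕ) (hp : 3 ≤ p) (hn : 1 ≤ n)
    (hd : d ≤ p ^ (n + 1) - p - 1) (hj : j + n + 1 ≤ L) :
    d * p ^ j < p ^ L - 1 := by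
  have hB := hppow' p n hp hn
  have e1 : (p ^ (n + 1) - p - 1) * p ^ j + (p + 1) * p ^ j = p ^ (n + 1 + j) := by
    rw [← Nat.add_mul]
    have h : p ^ (n + 1) - p - 1 + (p + 1) = p ^ (n + 1) := by omega
    rw [h, ← pow_add]
  have e2 : p + 1 ≤ (p + 1) * p ^ j :=
    Nat.le_mul_of_pos_right _ (Nat.pow_pos (by omega))
  have e3 : d * p ^ j ≤ (p ^ (n + 1) - p - 1) * p ^ j := Nat.mul_le_mul_right _ hd
  have e4 : p ^ (n + 1 + j) ≤ p ^ L := Nat.pow_le_pow_right (by omega) (by omega)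
  have e5 : 1 ≤ p ^ L := Nat.one_le_pow _ _ (by omega)
  omega

lemma foldterm (p n L d b : ℕ) (hp : 3 ≤ p) (hn : 1 ≤ n) (hL : n + 2 ≤ L)
    (hd1 : 1 ≤ d) (hdB : d ≤ p ^ (n + 1) - p - 1) (hb : b < L) :
    (d * p ^ b) % (p ^ L - 1) = d % p ^ (L - b) * p ^ b + d / p ^ (L - b) := by
  have hp1 : 1 < p := by omega
  set q := p ^ (L - b) with hq
  have hq0 : 0 < q := Nat.pow_pos (by omega)
  have hqb : q * p ^ b = p ^ L := by rw [hq, ← pow_add]; congr 1; omega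
  have hpL1 : 1 ≤ p ^ L := Nat.one_le_pow _ _ (by omega)
  -- the remainder is < p^L - 1
  have hrlt : d % q * p ^ b + d / q < p ^ L - 1 := by
    rcases Nat.lt_or_ge (L - b) (n + 1) with hcase | hcase
    · -- L - b ≤ n
      have hb1 : 1 ≤ b := by omega
      have e1 : (q - 1) * p ^ b + p ^ b = p ^ L := by
        have h0 : q - 1 + 1 = q := by omega
        calc (q - 1) * p ^ b + p ^ b = (q - 1 + 1) * p ^ b := by ring
        _ = q * p ^ b := by rw [h0]
        _ = p ^ L := hqb
      have elo : d % q * p ^ b ≤ (q - 1) * p ^ b := by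
        apply Nat.mul_le_mul_right
        have := Nat.mod_lt d hq0
        omega
      have ehi : d / q < p ^ (n + 1 - (L - b)) := by
        have h1 : d / q * q ≤ d := Nat.div_mul_le_self d q
        have h2 : d < p ^ (n + 1) := by
          have := hppow' p n hp hn
          omega
        have h3 : p ^ (n + 1) = p ^ (n + 1 - (L - b)) * q := by
          rw [hq, ← pow_add]; congr 1; omega
        have h4 : d / q * q < p ^ (n + 1 - (L - b)) * q := by omega
        exact Nat.lt_of_mul_lt_mul_right h4
      have ehi2 : p ^ (n + 1 - (L - b)) ≤ p ^ (b - 1) :=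
        Nat.pow_le_pow_right (by omega) (by omega)
      have e_pb : p ^ (b - 1) * p = p ^ b := by
        rw [← pow_succ]; congr 1; omega
      have e_3 : p ^ (b - 1) * 3 ≤ p ^ (b - 1) * p := Nat.mul_le_mul_left _ hp
      have e_1 : 1 ≤ p ^ (b - 1) := Nat.one_le_pow _ _ (by omega)
      omega
    · -- L - b ≥ n + 1 : d < q
      have h2 : d < q := by
        have h3 : p ^ (n + 1) ≤ q := by
          rw [hq]; exact Nat.pow_le_pow_right (by omega) hcase
        have := hppow' p n hp hn
        omega
      rw [Nat.mod_eq_of_lt h2, Nat.div_eq_of_lt h2, Nat.add_zero]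
      exact smallterm' p n L d b hp hn hdB (by omega)
  -- the value decomposition
  have hval : d * p ^ b = (d % q * p ^ b + d / q) + (p ^ L - 1) * (d / q) := by
    have hsplit : q * (d / q) + d % q = d := Nat.div_add_mod d q
    have h1 : d * p ^ b = d / q * (q * p ^ b) + d % q * p ^ b := by
      calc d * p ^ b = (q * (d / q) + d % q) * p ^ b := by rw [hsplit]
      _ = d / q * (q * p ^ b) + d % q * p ^ b := by ring
    rw [hqb] at h1
    have h2 : d / q * p ^ L = (p ^ L - 1) * (d / q) + d / q := by
      have h3 : (p ^ L - 1) * (d / q) + 1 * (d / q) = p ^ L * (d / q) := by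
        rw [← Nat.add_mul]
        congr 1
        omega
      have h4 : p ^ L * (d / q) = d / q * p ^ L := mul_comm _ _
      omega
    omega
  rw [hval, Nat.add_mul_mod_self_left, Nat.mod_eq_of_lt hrlt]


lemma lofact (p n L d b : ℕ) (hp3 : 3 ≤ p) (hn : 1 ≤ n)
    (hd1 : 1 ≤ d) (hdB : d ≤ p ^ (n + 1) - p - 1) (hcop : ¬ p ∣ d) (hb : b < L) :
    1 ≤ d % p ^ (L - b) ∧ d % p ^ (L - b) ≤ p ^ (n + 1) - p - 1 := by
  have hp1 : 1 < p := by omega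
  have hq0 : 0 < p ^ (L - b) := Nat.pow_pos (by omega)
  constructor
  · rcases Nat.eq_zero_or_pos (d % p ^ (L - b)) with h0 | h0
    · exfalso
      have hd : p ^ (L - b) ∣ d := Nat.dvd_of_mod_eq_zero h0
      exact hcop (dvd_trans (dvd_pow_self p (by omega)) hd)
    · omega
  · rcases Nat.lt_or_ge (L - b) (n + 1) with hcase | hcase
    · have h2 : d % p ^ (L - b) < p ^ (L - b) := Nat.mod_lt _ hq0
      have h3 : p ^ (L - b) ≤ p ^ n := Nat.pow_le_pow_right (by omega) (by omega)
      have h4 : p ^ n * p = p ^ (n + 1) := by rw [← pow_succ]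
      have h5 : p ^ n * 3 ≤ p ^ n * p := Nat.mul_le_mul_left _ hp3
      have h6 : 1 ≤ p ^ n := Nat.one_le_pow _ _ (by omega)
      have h7 : p ≤ p ^ n := by
        conv_lhs => rw [← pow_one p]
        exact Nat.pow_le_pow_right (by omega) (by omega)
      omega
    · have h3 : p ^ (n + 1) ≤ p ^ (L - b) := Nat.pow_le_pow_right (by omega) hcase
      have hB := hppow' p n hp3 hn
      have h2 : d < p ^ (L - b) := by omega
      rw [Nat.mod_eq_of_lt h2]
      exact hdB

lemma core (p n : ℕ) (hp3 : 3 ≤ p) (hn : 2 ≤ n)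
    (ℓ : ℕ) (hl : 0 < ℓ) (units0 : List (ℕ × ℕ)) (hne : units0 ≠ [])
    (hu : ∀ x ∈ units0, 1 ≤ x.1 ∧ x.1 ≤ p ^ (n + 1) - p - 1 ∧ ¬ p ∣ x.1)
    (hdvd : (p ^ ℓ - 1) ∣ (units0.map (fval p)).sum) :
    ℓ ≤ n * units0.length := by
  have hp1 : 1 < p := by omega
  set V := units0.length with hV
  have hV1 : 1 ≤ V := by
    rw [hV]
    exact List.length_pos_iff.mpr hne
  set c := 2 * n + 3 + V with hc
  set K := p ^ c with hK
  have hK3 : 2 * c + 1 ≤ K :=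
    le_trans (two_mul_add_one_le_three_pow c) (Nat.pow_le_pow_left hp3 c)
  have hK1 : 1 ≤ K := by omega
  set L := K * ℓ with hL
  have hLK : K ≤ L := Nat.le_mul_of_pos_right _ hl
  have hLn2 : n + 2 ≤ L := by omega
  set M := p ^ L - 1 with hM
  have hpL1 : 1 ≤ p ^ L := Nat.one_le_pow _ _ (by omega)
  have hpn1 : p + 1 ≤ p ^ (n + 1) := hppow' p n hp3 (by omega)
  have hM1 : 2 ≤ M := by
    have h3 : p ^ 1 ≤ p ^ L := Nat.pow_le_pow_right (by omega) (by omega)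
    rw [pow_one] at h3
    omega
  set uK := (List.range K).flatMap (fun k => units0.map (fun x => (x.1, x.2 + k * ℓ))) with huK
  have hlenK : uK.length = K * V := flat_len K units0 _
  have hsumK : (uK.map (fval p)).sum
      = (∑ k ∈ Finset.range K, p ^ (k * ℓ)) * (units0.map (fval p)).sum :=
    flat_sum p ℓ units0 K
  have hMdvd : M ∣ (uK.map (fval p)).sum := by
    obtain ⟨m, hm⟩ := hdvd
    have hMfact : M = (∑ k ∈ Finset.range K, p ^ (k * ℓ)) * (p ^ ℓ - 1) := by
      have h1 : ∑ k ∈ Finset.range K, p ^ (k * ℓ) = ∑ k ∈ Finset.range K, (p ^ ℓ) ^ k := by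
        apply Finset.sum_congr rfl
        intro k _
        rw [← pow_mul, mul_comm]
      rw [hM, h1, mul_comm, geom _ _ (Nat.one_le_pow _ _ (by omega)), ← pow_mul, hL, mul_comm K ℓ]
    rw [hsumK, hm, hMfact]
    exact ⟨m, by ring⟩
  have huKmem : ∀ x ∈ uK, 1 ≤ x.1 ∧ x.1 ≤ p ^ (n + 1) - p - 1 ∧ ¬ p ∣ x.1 := by
    intro x hx
    rw [huK] at hx
    simp only [List.mem_flatMap, List.mem_range, List.mem_map] at hx
    obtain ⟨k, -, y, hy, rfl⟩ := hx
    exact hu y hy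
  set Y : ℕ → ℕ := fun t => (uK.map (fun x => x.1 * p ^ ((x.2 + t) % L) % M)).sum with hY
  have hYmod : ∀ t, M ∣ Y t := by
    intro t
    have h1 : Y t ≡ (uK.map (fun x => x.1 * p ^ (x.2 + t))).sum [MOD M] := by
      apply list_sum_modEq
      intro x _
      calc x.1 * p ^ ((x.2 + t) % L) % M
          ≡ x.1 * p ^ ((x.2 + t) % L) [MOD M] := Nat.mod_modEq _ _
      _ ≡ x.1 * p ^ (x.2 + t) [MOD M] :=
          Nat.ModEq.mul_left x.1 (pow_mod_cycle p L (x.2 + t) (by omega) (by omega)).symm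
    have h2 : (uK.map (fun x => x.1 * p ^ (x.2 + t))).sum = p ^ t * (uK.map (fval p)).sum := by
      rw [← List.sum_map_mul_left]
      congr 1
      apply List.map_congr_left
      intro x _
      show x.1 * p ^ (x.2 + t) = p ^ t * fval p x
      show x.1 * p ^ (x.2 + t) = p ^ t * (x.1 * p ^ x.2)
      rw [pow_add]; ring
    have h3 : M ∣ p ^ t * (uK.map (fval p)).sum := Dvd.dvd.mul_left hMdvd _
    have h4 : Y t ≡ 0 [MOD M] := by
      calc Y t ≡ p ^ t * (uK.map (fval p)).sum [MOD M] := h2 ▸ h1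
      _ ≡ 0 [MOD M] := Nat.modEq_zero_iff_dvd.mpr h3
    exact Nat.modEq_zero_iff_dvd.mp h4
  have hBM : p ^ (n + 1) - p - 1 < M := by
    have h1 : p ^ (n + 1) ≤ p ^ L := Nat.pow_le_pow_right (by omega) (by omega)
    omega
  have huKne : uK ≠ [] := by
    intro h
    rw [h] at hlenK
    simp at hlenK
    omega
  have hYlb : ∀ t, M ≤ Y t := by
    intro t
    obtain ⟨x, hx⟩ := List.exists_mem_of_ne_nil uK huKne
    obtain ⟨h1, hB, hcop⟩ := huKmem x hx
    have hterm : 0 < x.1 * p ^ ((x.2 + t) % L) % M := by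
      set b := (x.2 + t) % L with hb
      have hbL : b < L := Nat.mod_lt _ (by omega)
      by_contra h0
      push_neg at h0
      have h0' : x.1 * p ^ b % M = 0 := by omega
      have hdvd1 : M ∣ x.1 * p ^ b := Nat.dvd_of_mod_eq_zero h0'
      have hdvd2 : M ∣ x.1 * p ^ b * p ^ (L - b) := Dvd.dvd.mul_right hdvd1 _
      have heq2 : x.1 * p ^ b * p ^ (L - b) = x.1 * p ^ L := by
        rw [mul_assoc, ← pow_add]
        congr 2
        omega
      have heq3 : x.1 * p ^ L = x.1 * M + x.1 := by
        have h5 : p ^ L = M + 1 := by omega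
        rw [h5]; ring
      have hdvd3 : M ∣ x.1 := by
        have h5 : M ∣ x.1 * M := Dvd.intro_left _ rfl
        have h6 : M ∣ x.1 * M + x.1 := by rw [← heq3, ← heq2]; exact hdvd2
        exact (Nat.dvd_add_right h5).mp h6
      have := Nat.le_of_dvd (by omega) hdvd3
      omega
    have hmem2 : x.1 * p ^ ((x.2 + t) % L) % M
        ∈ uK.map (fun x => x.1 * p ^ ((x.2 + t) % L) % M) := List.mem_map_of_mem hx
    have hpos : 0 < Y t :=
      lt_of_lt_of_le hterm (List.single_le_sum (fun _ _ => Nat.zero_le _) _ hmem2)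
    exact Nat.le_of_dvd hpos (hYmod t)
  by_cases hall : ∀ t ∈ Finset.range L, 2 * M ≤ Y t
  · -- mass case
    have h2LM : L * (2 * M) ≤ ∑ t ∈ Finset.range L, Y t := by
      calc L * (2 * M) = ∑ _t ∈ Finset.range L, 2 * M := by
            rw [Finset.sum_const, Finset.card_range, smul_eq_mul]
      _ ≤ ∑ t ∈ Finset.range L, Y t := Finset.sum_le_sum hall
    have hswap : ∑ t ∈ Finset.range L, Y t
        = (uK.map (fun x => ∑ t ∈ Finset.range L, x.1 * p ^ ((x.2 + t) % L) % M)).sum :=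
      sum_range_list L uK _
    have hperunit : ∀ x ∈ uK,
        (p - 1) * ∑ t ∈ Finset.range L, x.1 * p ^ ((x.2 + t) % L) % M
          ≤ M * (p + 1 + n * (p - 1)) := by
      intro x hx
      obtain ⟨h1, hB, -⟩ := huKmem x hx
      have hre : ∑ t ∈ Finset.range L, x.1 * p ^ ((x.2 + t) % L) % M
          = ∑ j ∈ Finset.range L, x.1 * p ^ j % M :=
        sum_shift_mod L (by omega) (fun j => x.1 * p ^ j % M) x.2
      have hsplit : ∑ j ∈ Finset.Ico 0 (L - n), x.1 * p ^ j % M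
            + ∑ j ∈ Finset.Ico (L - n) L, x.1 * p ^ j % M
          = ∑ j ∈ Finset.range L, x.1 * p ^ j % M := by
        rw [Finset.sum_Ico_consecutive _ (Nat.zero_le _) (by omega), Finset.range_eq_Ico]
      have hid : ∀ j ∈ Finset.Ico 0 (L - n), x.1 * p ^ j % M = x.1 * p ^ j := by
        intro j hj
        rw [Finset.mem_Ico] at hj
        apply Nat.mod_eq_of_lt
        rw [hM]
        exact smallterm' p n L x.1 j hp3 (by omega) hB (by omega)
      have hpart1 : (p - 1) * ∑ j ∈ Finset.Ico 0 (L - n), x.1 * p ^ j % M ≤ p * M + p := by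
        rw [Finset.sum_congr rfl hid]
        have e1 : ∑ j ∈ Finset.Ico 0 (L - n), x.1 * p ^ j
            = x.1 * ∑ j ∈ Finset.range (L - n), p ^ j := by
          rw [← Finset.range_eq_Ico, Finset.mul_sum]
        rw [e1]
        have e2 : (p - 1) * (x.1 * ∑ j ∈ Finset.range (L - n), p ^ j)
            = x.1 * ((p - 1) * ∑ j ∈ Finset.range (L - n), p ^ j) := by ring
        rw [e2, geom p (L - n) (by omega)]
        have e3 : x.1 * (p ^ (L - n) - 1) ≤ p ^ (n + 1) * p ^ (L - n) := by
          calc x.1 * (p ^ (L - n) - 1) ≤ p ^ (n + 1) * (p ^ (L - n) - 1) :=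
                Nat.mul_le_mul_right _ (by omega)
          _ ≤ p ^ (n + 1) * p ^ (L - n) := Nat.mul_le_mul_left _ (by omega)
        have e4 : p ^ (n + 1) * p ^ (L - n) = p ^ (L + 1) := by
          rw [← pow_add]; congr 1; omega
        have e5 : p ^ (L + 1) = p * p ^ L := by rw [pow_succ, mul_comm]
        have e6 : p * p ^ L = p * M + p := by
          have h7 : p ^ L = M + 1 := by omega
          rw [h7]; ring
        omega
      have hpart2 : (p - 1) * ∑ j ∈ Finset.Ico (L - n) L, x.1 * p ^ j % M
          ≤ (p - 1) * (n * (M - 1)) := by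
        apply Nat.mul_le_mul_left
        calc ∑ j ∈ Finset.Ico (L - n) L, x.1 * p ^ j % M
            ≤ ∑ _j ∈ Finset.Ico (L - n) L, (M - 1) := by
              apply Finset.sum_le_sum
              intro j _
              have := Nat.mod_lt (x.1 * p ^ j) (show 0 < M by omega)
              omega
        _ = n * (M - 1) := by
              rw [Finset.sum_const, Nat.card_Ico, smul_eq_mul]
              congr 1
              omega
      have e8 : (p - 1) * (n * (M - 1)) ≤ n * (p - 1) * M := by
        calc (p - 1) * (n * (M - 1)) = n * ((p - 1) * (M - 1)) := by ring
        _ ≤ n * ((p - 1) * M) := Nat.mul_le_mul_left _ (Nat.mul_le_mul_left _ (by omega))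
        _ = n * (p - 1) * M := by ring
      have e9 : p ≤ M := by
        have h2 : p ^ 2 ≤ p ^ L := Nat.pow_le_pow_right (by omega) (by omega)
        have h3 : p ^ 2 = p * p := sq p
        have h4 : 3 * p ≤ p * p := Nat.mul_le_mul_right _ hp3
        omega
      have e10 : M * (p + 1 + n * (p - 1)) = p * M + M + n * (p - 1) * M := by ring
      have e11 : (p - 1) * (∑ j ∈ Finset.Ico 0 (L - n), x.1 * p ^ j % M
            + ∑ j ∈ Finset.Ico (L - n) L, x.1 * p ^ j % M)
          = (p - 1) * ∑ j ∈ Finset.Ico 0 (L - n), x.1 * p ^ j % M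
            + (p - 1) * ∑ j ∈ Finset.Ico (L - n) L, x.1 * p ^ j % M := by ring
      rw [hre, ← hsplit, e11]
      omega
    have htotal : (p - 1) * ∑ t ∈ Finset.range L, Y t
        ≤ K * V * (M * (p + 1 + n * (p - 1))) := by
      rw [hswap, ← List.sum_map_mul_left]
      have h1 := List.sum_le_card_nsmul
        (uK.map (fun x => (p - 1) * ∑ t ∈ Finset.range L, x.1 * p ^ ((x.2 + t) % L) % M))
        (M * (p + 1 + n * (p - 1))) ?_
      · rw [List.length_map, hlenK] at h1
        simpa [smul_eq_mul] using h1
      · intro y hy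
        simp only [List.mem_map] at hy
        obtain ⟨x, hx, rfl⟩ := hy
        exact hperunit x hx
    -- chain the inequalities and cancel
    have hchain : (p - 1) * (L * (2 * M)) ≤ K * V * (M * (p + 1 + n * (p - 1))) :=
      le_trans (Nat.mul_le_mul_left _ h2LM) htotal
    have hr1 : (p - 1) * (L * (2 * M)) = 2 * L * (p - 1) * M := by ring
    have hr2 : K * V * (M * (p + 1 + n * (p - 1))) = K * V * (p + 1 + n * (p - 1)) * M := by ring
    rw [hr1, hr2] at hchain
    have hcancelM : 2 * L * (p - 1) ≤ K * V * (p + 1 + n * (p - 1)) :=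
      Nat.le_of_mul_le_mul_right hchain (by omega)
    have hr3 : 2 * L * (p - 1) = 2 * ℓ * (p - 1) * K := by rw [hL]; ring
    have hr4 : K * V * (p + 1 + n * (p - 1)) = V * (p + 1 + n * (p - 1)) * K := by ring
    rw [hr3, hr4] at hcancelM
    have hcancelK : 2 * ℓ * (p - 1) ≤ V * (p + 1 + n * (p - 1)) :=
      Nat.le_of_mul_le_mul_right hcancelM (by omega)
    have hC : p + 1 + n * (p - 1) ≤ (n + 2) * (p - 1) := by
      have h1 : (n + 2) * (p - 1) = n * (p - 1) + 2 * (p - 1) := by ring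
      omega
    have hfin1 : 2 * ℓ * (p - 1) ≤ V * ((n + 2) * (p - 1)) :=
      le_trans hcancelK (Nat.mul_le_mul_left _ hC)
    have hr5 : V * ((n + 2) * (p - 1)) = V * (n + 2) * (p - 1) := by ring
    have hr6 : 2 * ℓ * (p - 1) = 2 * ℓ * (p - 1) := rfl
    rw [hr5] at hfin1
    have hfin2 : 2 * ℓ ≤ V * (n + 2) :=
      Nat.le_of_mul_le_mul_right hfin1 (by omega)
    have hfin3 : V * (n + 2) ≤ V * (2 * n) := Nat.mul_le_mul_left _ (by omega)
    have hfin4 : V * (2 * n) = 2 * (n * V) := by ring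
    omega
  · -- exact case
    push_neg at hall
    obtain ⟨t, ht, hYt2⟩ := hall
    have hYtM : Y t = M := by
      obtain ⟨cst, hcst⟩ := hYmod t
      have h1 := hYlb t
      rcases cst with _ | cst
      · rw [hcst] at h1; simp at h1; omega
      · rcases cst with _ | cst
        · omega
        · exfalso
          have e1 : M * 2 ≤ M * (cst + 1 + 1) := Nat.mul_le_mul_left _ (by omega)
          omega
    set lo : ℕ × ℕ → ℕ := fun x => x.1 % p ^ (L - (x.2 + t) % L) with hlo
    set hi : ℕ × ℕ → ℕ := fun x => x.1 / p ^ (L - (x.2 + t) % L) with hhi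
    have hfold : ∀ x ∈ uK, x.1 * p ^ ((x.2 + t) % L) % M
        = lo x * p ^ ((x.2 + t) % L) + hi x := by
      intro x hx
      obtain ⟨h1, hB, -⟩ := huKmem x hx
      rw [hM]
      exact foldterm p n L x.1 ((x.2 + t) % L) hp3 (by omega) hLn2 h1 hB
        (Nat.mod_lt _ (by omega))
    have hYsum : Y t = (uK.map (fun x => lo x * p ^ ((x.2 + t) % L))).sum
        + (uK.map hi).sum := by
      rw [hY]
      show (uK.map (fun x => x.1 * p ^ ((x.2 + t) % L) % M)).sum = _
      rw [List.map_congr_left hfold, sum_map_add]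
    set g := (uK.map hi).sum with hg
    set pu := uK.map (fun x => (lo x, (x.2 + t) % L)) with hpu
    have hpusum : (pu.map (fval p)).sum
        = (uK.map (fun x => lo x * p ^ ((x.2 + t) % L))).sum := by
      rw [hpu, List.map_map]
      rfl
    have hpuu : ∀ y ∈ pu, 1 ≤ y.1 ∧ y.1 ≤ p ^ (n + 1) - p - 1 := by
      intro y hy
      rw [hpu] at hy
      simp only [List.mem_map] at hy
      obtain ⟨x, hx, rfl⟩ := hy
      obtain ⟨h1, hB, hcop⟩ := huKmem x hx
      have hbL : (x.2 + t) % L < L := Nat.mod_lt _ (by omega)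
      have hlf := lofact p n L x.1 ((x.2 + t) % L) hp3 (by omega) h1 hB hcop hbL
      exact ⟨hlf.1, hlf.2⟩
    have hpeeleq : g + (pu.map (fval p)).sum = p ^ L - 1 := by
      rw [hpusum, ← hM]
      omega
    have hpeel := peel p n hp3 hn L pu g hpuu hpeeleq
    have hpulen : pu.length = K * V := by rw [hpu, List.length_map, hlenK]
    have hgbound : g ≤ K * V * p ^ (n + 1) := by
      rw [hg]
      have h1 := List.sum_le_card_nsmul (uK.map hi) (p ^ (n + 1)) ?_
      · rw [List.length_map, hlenK] at h1
        simpa [smul_eq_mul] using h1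
      · intro y hy
        simp only [List.mem_map] at hy
        obtain ⟨x, hx, rfl⟩ := hy
        obtain ⟨h1, hB, -⟩ := huKmem x hx
        have h2 : hi x ≤ x.1 := Nat.div_le_self _ _
        omega
    set W := Nat.log p (K * V) + 1 with hW
    have hKVW : K * V < p ^ W := Nat.lt_pow_succ_log_self hp1 _
    have hgp : g + 1 ≤ p ^ (W + (n + 1)) := by
      have e1 : p ^ (W + (n + 1)) = p ^ W * p ^ (n + 1) := pow_add p _ _
      have e2 : K * V * p ^ (n + 1) + 1 * p ^ (n + 1) = (K * V + 1) * p ^ (n + 1) := by ring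
      have e3 : (K * V + 1) * p ^ (n + 1) ≤ p ^ W * p ^ (n + 1) :=
        Nat.mul_le_mul_right _ (by omega)
      have e4 : 1 ≤ p ^ (n + 1) := Nat.one_le_pow _ _ (by omega)
      omega
    have hglog : Nat.log p (g + 1) ≤ W + (n + 1) := by
      calc Nat.log p (g + 1) ≤ Nat.log p (p ^ (W + (n + 1))) := Nat.log_mono_right hgp
      _ = W + (n + 1) := Nat.log_pow hp1 _
    have hlogKV : Nat.log p (K * V) = c + Nat.log p V := by
      rw [hK, mul_comm]
      rw [log_mul_pow p hp1 V c (by omega)]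
      omega
    have hlogV : Nat.log p V < V := Nat.log_lt_self p (by omega)
    rw [hpulen] at hpeel
    -- hpeel : L ≤ n * (K * V) + Nat.log p (g + 1) + n
    have e1 : K * (n * V + 1) = n * (K * V) + K := by ring
    have e2 : Nat.log p (g + 1) + n < K := by omega
    have hKl : K * ℓ < K * (n * V + 1) := by
      rw [hL] at hpeel
      omega
    have hfin := Nat.lt_of_mul_lt_mul_left hKl
    omega




def ul (p d : ℕ) : List ℕ → ℕ → List (ℕ × ℕ)
  | [], _ => []
  | c :: tl, j => List.replicate c (d, j) ++ ul p d tl (j + 1)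

@[simp] lemma ul_nil (p d j : ℕ) : ul p d [] j = [] := rfl
@[simp] lemma ul_cons (p d c j : ℕ) (tl : List ℕ) :
    ul p d (c :: tl) j = List.replicate c (d, j) ++ ul p d tl (j + 1) := rfl

lemma ul_len (p d : ℕ) : ∀ (l : List ℕ) (j : ℕ), (ul p d l j).length = l.sum := by
  intro l
  induction l with
  | nil => intro j; rfl
  | cons c tl ih => intro j; simp [ih]

lemma ul_sum (p d : ℕ) : ∀ (l : List ℕ) (j : ℕ),
    ((ul p d l j).map (fval p)).sum = d * Nat.ofDigits p l * p ^ j := by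
  intro l
  induction l with
  | nil => intro j; simp [Nat.ofDigits]
  | cons c tl ih =>
    intro j
    rw [ul_cons, List.map_append, List.sum_append, ih, List.map_replicate,
      List.sum_replicate, Nat.ofDigits_cons]
    show c • (d * p ^ j) + d * Nat.ofDigits p tl * p ^ (j + 1) = _
    rw [smul_eq_mul, pow_succ]
    ring

lemma ul_mem (p d : ℕ) : ∀ (l : List ℕ) (j : ℕ) (x : ℕ × ℕ), x ∈ ul p d l j → x.1 = d := by
  intro l
  induction l with
  | nil => intro j x hx; simp at hx
  | cons c tl ih =>
    intro j x hx
    rw [ul_cons, List.mem_append] at hx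
    rcases hx with hx | hx
    · have := List.eq_of_mem_replicate hx
      rw [this]
    · exact ih (j + 1) x hx

lemma sum_flat {α : Type*} (l : List α) (f : α → List ℕ) :
    (l.flatMap f).sum = (l.map (fun a => (f a).sum)).sum := by
  induction l with
  | nil => simp
  | cons a l ih => simp [ih]

lemma map_flat {α β γ : Type*} (l : List α) (f : α → List β) (g : β → γ) :
    (l.flatMap f).map g = l.flatMap (fun a => (f a).map g) := by
  induction l with
  | nil => simp
  | cons a l ih => simp [ih]

lemma digitsum_pos (p : ℕ) (hp : 1 < p) : ∀ u, 0 < u → 0 < (Nat.digits p u).sum := by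
  intro u
  induction u using Nat.strong_induction_on with
  | _ u IH =>
  intro hu
  rw [Nat.digits_def' hp hu]
  simp only [List.sum_cons]
  rcases Nat.eq_zero_or_pos (u % p) with h0 | h0
  · have hdvd : p ∣ u := Nat.dvd_of_mod_eq_zero h0
    have h1 : 0 < u / p := Nat.div_pos (Nat.le_of_dvd hu hdvd) (by omega)
    have h2 : u / p < u := Nat.div_lt_self hu hp
    have := IH (u / p) h2 h1
    omega
  · omega

lemma main_len (p n : ℕ) (hp3 : 3 ≤ p) (hn : 2 ≤ n)
    (ℓ : ℕ) (hl : 0 < ℓ) (u : ℕ → ℕ)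
    (hsol : IsModSolution p ((Finset.Icc 1 (p ^ (n + 1) - p - 1)).filter
      (fun i => Nat.Coprime i p)) ℓ u) :
    ℓ ≤ n * solWeight p ((Finset.Icc 1 (p ^ (n + 1) - p - 1)).filter
      (fun i => Nat.Coprime i p)) u := by
  set D := (Finset.Icc 1 (p ^ (n + 1) - p - 1)).filter (fun i => Nat.Coprime i p) with hD
  obtain ⟨-, -, hdvd, hpos⟩ := hsol
  set units0 := D.toList.flatMap (fun d => ul p d (Nat.digits p (u d)) 0) with hu0
  have hlen : units0.length = solWeight p D u := by
    rw [hu0, List.length_flatMap]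
    have h1 : (D.toList.map (List.length ∘ fun d => ul p d (Nat.digits p (u d)) 0)).sum
        = (D.toList.map (fun d => (Nat.digits p (u d)).sum)).sum := by
      congr 1
      apply List.map_congr_left
      intro d _
      exact ul_len p d _ 0
    erw [h1, Finset.sum_map_toList]
    rfl
  have hsum : (units0.map (fval p)).sum = ∑ d ∈ D, d * u d := by
    rw [hu0, map_flat, sum_flat]
    have h1 : (D.toList.map (fun d => ((ul p d (Nat.digits p (u d)) 0).map (fval p)).sum)).sum
        = (D.toList.map (fun d => d * u d)).sum := by
      congr 1
      apply List.map_congr_left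
      intro d _
      rw [ul_sum, pow_zero, mul_one, Nat.ofDigits_digits]
    rw [h1, Finset.sum_map_toList]
  have hne : units0 ≠ [] := by
    intro h
    rw [h] at hsum
    simp at hsum
    omega
  have hmem : ∀ x ∈ units0, 1 ≤ x.1 ∧ x.1 ≤ p ^ (n + 1) - p - 1 ∧ ¬ p ∣ x.1 := by
    intro x hx
    rw [hu0] at hx
    rw [List.mem_flatMap] at hx
    obtain ⟨d, hd, hxd⟩ := hx
    have hx1 : x.1 = d := ul_mem p d _ 0 x hxd
    rw [Finset.mem_toList, hD, Finset.mem_filter, Finset.mem_Icc] at hd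
    obtain ⟨⟨hd1, hd2⟩, hdcop⟩ := hd
    refine ⟨by omega, by omega, ?_⟩
    intro hpd
    rw [hx1] at hpd
    have h2 : p ∣ Nat.gcd d p := Nat.dvd_gcd hpd dvd_rfl
    rw [Nat.Coprime] at hdcop
    rw [hdcop] at h2
    have := Nat.le_of_dvd (by omega) h2
    omega
  have hfin := core p n hp3 hn ℓ hl units0 hne hmem (by rw [hsum]; exact hdvd)
  rw [hlen] at hfin
  exact hfin


end Stmt15Aux

/-- Proposition `wgeom`: for an odd prime `p` and `n ≥ 2`, the `p`-density of
`D = { i : 1 ≤ i ≤ p^{n+1} − p − 1, gcd(i,p) = 1 }` equals `1/(n(p−1))`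
(attained as a minimum). -/
theorem stmt_15 (p n : ℕ) (hp : p.Prime) (hodd : Odd p) (hn : 2 ≤ n) :
    IsLeast (densitySet p ((Finset.Icc 1 (p ^ (n + 1) - p - 1)).filter
      (fun i => Nat.Coprime i p))) (1 / ((n : ℝ) * (p - 1))) := by
  have hp2 := hp.two_le
  have hp3 : 3 ≤ p := by
    rcases Nat.lt_or_ge p 3 with h | h
    · rw [Nat.odd_iff] at hodd
      omega
    · exact h
  have hp1 : 1 < p := by omega
  set D := (Finset.Icc 1 (p ^ (n + 1) - p - 1)).filter (fun i => Nat.Coprime i p) with hD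
  have hpn : p ^ n * p = p ^ (n + 1) := (pow_succ p n).symm
  have hpnp : p ≤ p ^ n := by
    conv_lhs => rw [← pow_one p]
    exact Nat.pow_le_pow_right (by omega) (by omega)
  have hpn1 : p + 1 ≤ p ^ (n + 1) := Stmt15Aux.hppow' p n hp3 (by omega)
  have hpn2 : 1 ≤ p ^ n := Nat.one_le_pow _ _ (by omega)
  have hpn3 : p ^ n * 3 ≤ p ^ n * p := Nat.mul_le_mul_left _ hp3
  have hmem : p ^ n - 1 ∈ D := by
    rw [hD, Finset.mem_filter, Finset.mem_Icc]
    refine ⟨⟨by omega, by omega⟩, ?_⟩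
    have hnd : ¬ p ∣ p ^ n - 1 := by
      intro hdvd
      have h1 : p ∣ p ^ n := dvd_pow_self p (by omega)
      have h2 : p ∣ p ^ n - (p ^ n - 1) := Nat.dvd_sub h1 hdvd
      have h3 : p ^ n - (p ^ n - 1) = 1 := by omega
      rw [h3] at h2
      have := Nat.le_of_dvd (by norm_num) h2
      omega
    exact Nat.coprime_comm.mp ((Nat.Prime.coprime_iff_not_dvd hp).mpr hnd)
  constructor
  · -- membership
    refine ⟨n, (fun d => if d = p ^ n - 1 then 1 else 0), by omega, ⟨?_, ?_, ?_, ?_⟩, ?_⟩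
    · intro d hd
      have hne : d ≠ p ^ n - 1 := by
        intro h
        rw [h] at hd
        exact hd hmem
      simp [hne]
    · intro d
      show (if d = p ^ n - 1 then 1 else 0) ≤ p ^ n - 1
      split <;> omega
    · have hsum : (∑ d ∈ D, d * (if d = p ^ n - 1 then 1 else 0)) = p ^ n - 1 := by
        rw [Finset.sum_eq_single_of_mem (p ^ n - 1) hmem]
        · simp
        · intro b _ hbne
          simp [hbne]
      rw [hsum]
    · have hsum : (∑ d ∈ D, d * (if d = p ^ n - 1 then 1 else 0)) = p ^ n - 1 := by
        rw [Finset.sum_eq_single_of_mem (p ^ n - 1) hmem]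
        · simp
        · intro b _ hbne
          simp [hbne]
      rw [hsum]
      omega
    · have hw : solWeight p D (fun d => if d = p ^ n - 1 then 1 else 0) = 1 := by
        rw [solWeight, Finset.sum_eq_single_of_mem (p ^ n - 1) hmem]
        · rw [if_pos rfl]
          rw [Nat.digits_def' hp1 (by norm_num : 0 < 1)]
          rw [Nat.mod_eq_of_lt hp1, Nat.div_eq_of_lt hp1]
          simp
        · intro b _ hbne
          simp [hbne]
      rw [hw]
      norm_num
  · -- lower bound
    rintro x ⟨ℓ, u, hl, hsol, rfl⟩
    have hlen := Stmt15Aux.main_len p n hp3 hn ℓ hl u hsol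
    set V := solWeight p D u with hV
    have hV1 : 1 ≤ V := by
      rcases Nat.eq_zero_or_pos V with h0 | h0
      · rw [h0] at hlen
        omega
      · exact h0
    have hpR : (3 : ℝ) ≤ (p : ℝ) := by exact_mod_cast hp3
    have hnR : (2 : ℝ) ≤ (n : ℝ) := by exact_mod_cast hn
    have hlR : (0 : ℝ) < (ℓ : ℝ) := by exact_mod_cast hl
    have hVR : (1 : ℝ) ≤ (V : ℝ) := by exact_mod_cast hV1
    have hlenR : (ℓ : ℝ) ≤ (n : ℝ) * (V : ℝ) := by exact_mod_cast hlen
    rw [div_le_div_iff₀ (by nlinarith) (by nlinarith)]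
    nlinarith
end

section
/- Let p be an odd prime. The p-density of the set D = { i : 1 ≤ i ≤ p² − p − 1, gcd(i,p) = 1 } equals 1/(p−1). -/
open Finset

/-- digit decomposition -/
lemma digit_decomp (p : ℕ) (hp : 0 < p) : ∀ (ℓ n : ℕ), n < p ^ ℓ →
    ∑ j ∈ range ℓ, n / p ^ j % p * p ^ j = n := by
  intro ℓ
  induction ℓ with
  | zero =>
    intro n hn
    simp only [pow_zero, Nat.lt_one_iff] at hn
    simp [hn]
  | succ ℓ ih =>
    intro n hn
    rw [Finset.sum_range_succ']
    have h1 : ∀ i, n / p ^ (i + 1) % p * p ^ (i + 1) = (n / p) / p ^ i % p * p ^ i * p := by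
      intro i
      rw [pow_succ', Nat.div_div_eq_div_mul]
      ring
    simp only [h1]
    rw [← Finset.sum_mul]
    have h2 : n / p < p ^ ℓ := by
      rw [Nat.div_lt_iff_lt_mul hp]
      calc n < p ^ (ℓ + 1) := hn
      _ = p ^ ℓ * p := by rw [pow_succ]
    rw [ih (n / p) h2]
    simp only [pow_zero, mul_one, Nat.div_one]
    rw [mul_comm]
    exact Nat.div_add_mod n p

/-- digits sum as sum of digit extraction -/
lemma digits_sum_eq (p : ℕ) (hp : 2 ≤ p) : ∀ (ℓ n : ℕ), n < p ^ ℓ →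
    (Nat.digits p n).sum = ∑ j ∈ range ℓ, n / p ^ j % p := by
  intro ℓ
  induction ℓ with
  | zero =>
    intro n hn
    simp only [pow_zero, Nat.lt_one_iff] at hn
    simp [hn]
  | succ ℓ ih =>
    intro n hn
    rcases Nat.eq_zero_or_pos n with h | h
    · subst h; simp
    rw [Nat.digits_def' (by omega : 1 < p) h]
    rw [Finset.sum_range_succ']
    have h2 : n / p < p ^ ℓ := by
      rw [Nat.div_lt_iff_lt_mul (by omega : 0 < p)]
      calc n < p ^ (ℓ + 1) := hn
      _ = p ^ ℓ * p := by rw [pow_succ]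
    have h1 : ∀ i, n / p ^ (i + 1) % p = (n / p) / p ^ i % p := by
      intro i
      rw [pow_succ', Nat.div_div_eq_div_mul]
    simp only [h1, List.sum_cons]
    rw [ih (n / p) h2]
    simp [add_comm]

/-- geometric sum -/
lemma geom_sum_eq' (p : ℕ) (hp : 1 ≤ p) (n : ℕ) :
    (∑ k ∈ range n, p ^ k) * (p - 1) + 1 = p ^ n := by
  induction n with
  | zero => simp
  | succ n ih =>
    rw [Finset.sum_range_succ, add_mul, pow_succ]
    have h2 : p ^ n * (p - 1) + p ^ n = p ^ n * p := by
      obtain ⟨q, rfl⟩ : ∃ q, p = q + 1 := ⟨p - 1, by omega⟩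
      simp [Nat.mul_succ]
    omega

/-- key identity -/
lemma key_identity (p : ℕ) (hp : 1 ≤ p) (n : ℕ) :
    ∑ i ∈ range n, p ^ i = n + ∑ k ∈ range n, (n - 1 - k) * (p ^ k * (p - 1)) := by
  induction n with
  | zero => simp
  | succ n ih =>
    rw [Finset.sum_range_succ (f := fun i => p ^ i),
      Finset.sum_range_succ (f := fun k => (n + 1 - 1 - k) * (p ^ k * (p - 1)))]
    have hshift : ∑ k ∈ range n, (n + 1 - 1 - k) * (p ^ k * (p - 1))
        = ∑ k ∈ range n, (n - 1 - k) * (p ^ k * (p - 1)) + ∑ k ∈ range n, p ^ k * (p - 1) := by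
      rw [← Finset.sum_add_distrib]
      apply Finset.sum_congr rfl
      intro k hk
      simp only [Finset.mem_range] at hk
      have h3 : n + 1 - 1 - k = (n - 1 - k) + 1 := by omega
      rw [h3, add_mul, one_mul]
    have hg : ∑ k ∈ range n, p ^ k * (p - 1) = p ^ n - 1 := by
      have := geom_sum_eq' p hp n
      rw [← Finset.sum_mul]
      omega
    have h0 : (n + 1 - 1 - n) = 0 := by omega
    rw [hshift, hg, h0, zero_mul]
    have hpn : 1 ≤ p ^ n := Nat.one_le_pow _ _ (by omega)
    omega

/-- sum swap helper -/
lemma sum_swap_helper (g h : ℕ → ℕ) (n : ℕ) :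
    ∑ i ∈ range n, g i * (∑ k ∈ range i, h k)
      = ∑ k ∈ range n, h k * (∑ i ∈ Ico (k + 1) n, g i) := by
  induction n with
  | zero => simp
  | succ n ih =>
    rw [Finset.sum_range_succ, ih, Finset.sum_range_succ]
    have h1 : ∀ k ∈ range n, h k * (∑ i ∈ Ico (k + 1) (n + 1), g i)
        = h k * (∑ i ∈ Ico (k + 1) n, g i) + h k * g n := by
      intro k hk
      simp only [Finset.mem_range] at hk
      rw [Finset.sum_Ico_succ_top (by omega), mul_add]
    rw [Finset.sum_congr rfl h1, Finset.sum_add_distrib]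
    have h4 : ∑ k ∈ range n, h k * g n = g n * ∑ k ∈ range n, h k := by
      rw [Finset.mul_sum]
      apply Finset.sum_congr rfl
      intros; ring
    rw [h4]
    have h5 : ∑ i ∈ Ico (n + 1) (n + 1), g i = 0 := by simp
    rw [h5, mul_zero, add_zero]

/-- rotation permutation lemma -/
lemma sum_rotate (f : ℕ → ℕ) (ℓ q : ℕ) (hq : q < ℓ) :
    ∑ j ∈ range ℓ, f ((j + q) % ℓ) = ∑ j ∈ range ℓ, f j := by
  have hl : 0 < ℓ := by omega
  apply Finset.sum_nbij' (fun j => (j + q) % ℓ) (fun t => (t + (ℓ - q)) % ℓ)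
  · intro a ha; simp only [Finset.mem_range] at *; exact Nat.mod_lt _ hl
  · intro a ha; simp only [Finset.mem_range] at *; exact Nat.mod_lt _ hl
  · intro a ha
    simp only [Finset.mem_range] at ha
    rw [Nat.mod_add_mod]
    have h : a + q + (ℓ - q) = a + ℓ := by omega
    rw [h, Nat.add_mod_right, Nat.mod_eq_of_lt ha]
  · intro a ha
    simp only [Finset.mem_range] at ha
    rw [Nat.mod_add_mod]
    have h : a + (ℓ - q) + q = a + ℓ := by omega
    rw [h, Nat.add_mod_right, Nat.mod_eq_of_lt ha]
  · intro a ha; rfl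

/-- power mod: p^a ≡ p^(a % ℓ) mod (p^ℓ - 1) -/
lemma pow_mod_cyc (p ℓ a : ℕ) (hp : 1 ≤ p) :
    p ^ a ≡ p ^ (a % ℓ) [MOD p ^ ℓ - 1] := by
  conv_lhs => rw [← Nat.div_add_mod a ℓ]
  rw [pow_add, pow_mul]
  have h1 : p ^ ℓ ≡ 1 [MOD p ^ ℓ - 1] := by
    have h : 1 ≤ p ^ ℓ := Nat.one_le_pow _ _ (by omega)
    unfold Nat.ModEq
    conv_lhs => rw [(by omega : p ^ ℓ = (p ^ ℓ - 1) + 1)]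
    simp [Nat.add_mod_left]
  calc (p ^ ℓ) ^ (a / ℓ) * p ^ (a % ℓ)
      ≡ 1 ^ (a / ℓ) * p ^ (a % ℓ) [MOD p ^ ℓ - 1] := (h1.pow _).mul_right _
  _ = p ^ (a % ℓ) := by rw [one_pow, one_mul]

lemma modEq_sum (n : ℕ) (s : Finset ℕ) (f g : ℕ → ℕ) (h : ∀ i ∈ s, f i ≡ g i [MOD n]) :
    (∑ i ∈ s, f i) ≡ (∑ i ∈ s, g i) [MOD n] := by
  classical
  induction s using Finset.induction_on with
  | empty => rfl
  | insert a s' hx ih =>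
    rw [Finset.sum_insert hx, Finset.sum_insert hx]
    exact (h _ (Finset.mem_insert_self _ _)).add
      (ih fun i hi => h i (Finset.mem_insert_of_mem hi))

lemma weight_ge (p ℓ : ℕ) (hp : 2 ≤ p) (hl : 0 < ℓ) (D : Finset ℕ)
    (hD : ∀ d ∈ D, d ≤ p ^ 2 - p - 1) (u : ℕ → ℕ)
    (hub : ∀ d, u d ≤ p ^ ℓ - 1)
    (hdvd : (p ^ ℓ - 1) ∣ ∑ d ∈ D, d * u d)
    (hpos : 0 < ∑ d ∈ D, d * u d) :
    ℓ ≤ ∑ d ∈ D, (Nat.digits p (u d)).sum := by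
  classical
  by_contra hcon
  push_neg at hcon
  set K := p ^ 2 - p - 1 with hK
  set m : ℕ → ℕ := fun j => ∑ d ∈ D, u d / p ^ j % p with hm
  set sg : ℕ → ℕ := fun j => ∑ d ∈ D, d * (u d / p ^ j % p) with hsg
  have hppos : 0 < p := by omega
  have hplpos : 0 < p ^ ℓ := Nat.pow_pos hppos
  have hult : ∀ d, u d < p ^ ℓ := fun d => by have := hub d; omega
  -- weight = ∑_j m j
  have hw : ∑ d ∈ D, (Nat.digits p (u d)).sum = ∑ j ∈ range ℓ, m j := by
    calc ∑ d ∈ D, (Nat.digits p (u d)).sum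
        = ∑ d ∈ D, ∑ j ∈ range ℓ, u d / p ^ j % p :=
          Finset.sum_congr rfl fun d _ => digits_sum_eq p hp ℓ (u d) (hult d)
      _ = ∑ j ∈ range ℓ, m j := Finset.sum_comm
  -- N decomposition
  have hN : ∑ d ∈ D, d * u d = ∑ j ∈ range ℓ, sg j * p ^ j := by
    calc ∑ d ∈ D, d * u d
        = ∑ d ∈ D, ∑ j ∈ range ℓ, d * (u d / p ^ j % p) * p ^ j := by
          apply Finset.sum_congr rfl
          intro d _
          conv_lhs => rw [← digit_decomp p hppos ℓ (u d) (hult d)]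
          rw [Finset.mul_sum]
          exact Finset.sum_congr rfl fun j _ => by ring
      _ = ∑ j ∈ range ℓ, ∑ d ∈ D, d * (u d / p ^ j % p) * p ^ j := Finset.sum_comm
      _ = ∑ j ∈ range ℓ, sg j * p ^ j := by
          apply Finset.sum_congr rfl
          intro j _
          rw [hsg, Finset.sum_mul]
  -- prefix sums
  set P : ℕ → ℕ := fun k => ∑ j ∈ range k, m j with hP
  have hPl : P ℓ < ℓ := by rw [hP]; rw [hw] at hcon; exact hcon
  have hPmono : ∀ a b, a ≤ b → b ≤ ℓ → P a + ∑ j ∈ Ico a b, m j = P b := by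
    intro a b hab _
    simp only [hP]
    simp only [Finset.range_eq_Ico]
    exact Finset.sum_Ico_consecutive m (Nat.zero_le a) hab
  -- minimizer
  have hex : ∃ c, c ≤ ℓ ∧ ∀ a, a ≤ ℓ → (P c : ℤ) - c ≤ (P a : ℤ) - a := by
    obtain ⟨c, hc, hmin⟩ := Finset.exists_min_image (range (ℓ + 1))
      (fun k => (P k : ℤ) - k) ⟨0, by simp⟩
    refine ⟨c, by simpa [Nat.lt_succ_iff] using hc, fun a ha => hmin a ?_⟩
    simp [Nat.lt_succ_iff, ha]
  set c := Nat.find hex with hc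
  obtain ⟨hcle, hcmin⟩ : c ≤ ℓ ∧ ∀ a, a ≤ ℓ → (P c : ℤ) - c ≤ (P a : ℤ) - a :=
    Nat.find_spec hex
  have hcstrict : ∀ a, a < c → (P c : ℤ) - c < (P a : ℤ) - a := by
    intro a ha
    have hna := Nat.find_min hex ha
    push_neg at hna
    obtain ⟨a', ha', hlt⟩ := hna (le_trans (le_of_lt ha) hcle)
    exact lt_of_le_of_lt (hcmin a' ha') hlt
  have hc1 : 1 ≤ c := by
    rcases Nat.eq_zero_or_pos c with h0 | h
    · exfalso
      have h1 := hcmin ℓ le_rfl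
      rw [h0] at h1
      have hP0 : P 0 = 0 := by simp [hP]
      rw [hP0] at h1
      omega
    · exact h
  set q := c % ℓ with hq
  have hqlt : q < ℓ := Nat.mod_lt _ hl
  -- window bounds
  have hwin : ∀ i, 1 ≤ i → i < ℓ → ∑ j ∈ Ico i ℓ, m ((j + q) % ℓ) ≤ ℓ - 1 - i := by
    intro i h1i hil
    by_cases hcl : c = ℓ
    · have hq0 : q = 0 := by rw [hq, hcl, Nat.mod_self]
      have he : ∀ j ∈ Ico i ℓ, m ((j + q) % ℓ) = m j := by
        intro j hj
        simp only [Finset.mem_Ico] at hj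
        rw [hq0, add_zero, Nat.mod_eq_of_lt hj.2]
      have heq : ∑ j ∈ Ico i ℓ, m ((j + q) % ℓ) = ∑ j ∈ Ico i ℓ, m j :=
        Finset.sum_congr rfl he
      rw [heq]
      have hs := hPmono i ℓ (le_of_lt hil) le_rfl
      have hstrict := hcstrict i (hcl ▸ hil)
      rw [hcl] at hstrict
      have hnat : P ℓ + i + 1 ≤ P i + ℓ := by omega
      omega
    · have hclt : c < ℓ := lt_of_le_of_ne hcle hcl
      have hqc : q = c := by rw [hq, Nat.mod_eq_of_lt hclt]
      by_cases hiq : i + c < ℓ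
      · -- split
        rw [← Finset.sum_Ico_consecutive (fun j => m ((j + q) % ℓ))
          (by omega : i ≤ ℓ - c) (by omega : ℓ - c ≤ ℓ)]
        have e1 : ∀ j ∈ Ico i (ℓ - c), m ((j + q) % ℓ) = m (j + c) := by
          intro j hj
          simp only [Finset.mem_Ico] at hj
          rw [hqc, Nat.mod_eq_of_lt (by omega)]
        have e2 : ∀ j ∈ Ico (ℓ - c) ℓ, m ((j + q) % ℓ) = m (j + c - ℓ) := by
          intro j hj
          simp only [Finset.mem_Ico] at hj
          rw [hqc, Nat.mod_eq_sub_mod (by omega), Nat.mod_eq_of_lt (by omega)]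
        have heq1 : ∑ j ∈ Ico i (ℓ - c), m ((j + q) % ℓ) = ∑ j ∈ Ico i (ℓ - c), m (j + c) :=
          Finset.sum_congr rfl e1
        have heq2 : ∑ j ∈ Ico (ℓ - c) ℓ, m ((j + q) % ℓ) = ∑ j ∈ Ico (ℓ - c) ℓ, m (j + c - ℓ) :=
          Finset.sum_congr rfl e2
        rw [heq1, heq2]
        have r1 : ∑ j ∈ Ico i (ℓ - c), m (j + c) = ∑ t ∈ Ico (i + c) ℓ, m t := by
          have h7 := Finset.sum_Ico_add' m i (ℓ - c) c
          rw [(show ℓ - c + c = ℓ by omega)] at h7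
          exact h7
        have r2 : ∑ j ∈ Ico (ℓ - c) ℓ, m (j + c - ℓ) = ∑ t ∈ Ico 0 c, m t := by
          have := Finset.sum_Ico_add' (fun j => m (j + c - ℓ)) 0 c (ℓ - c)
          rw [zero_add, (by omega : c + (ℓ - c) = ℓ)] at this
          rw [← this]
          apply Finset.sum_congr rfl
          intro j hj
          simp only [Finset.mem_Ico] at hj
          congr 1
          omega
        rw [r1, r2]
        have hs1 := hPmono (i + c) ℓ (by omega) le_rfl
        have hs2 : ∑ t ∈ Ico 0 c, m t = P c := by
          simp only [hP]
          rw [Finset.range_eq_Ico]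
        have hA1 := hcmin (i + c) (by omega)
        have hnat : P c + i ≤ P (i + c) := by omega
        omega
      · -- full wrap
        have e2 : ∀ j ∈ Ico i ℓ, m ((j + q) % ℓ) = m (j + c - ℓ) := by
          intro j hj
          simp only [Finset.mem_Ico] at hj
          rw [hqc, Nat.mod_eq_sub_mod (by omega), Nat.mod_eq_of_lt (by omega)]
        have heq2 : ∑ j ∈ Ico i ℓ, m ((j + q) % ℓ) = ∑ j ∈ Ico i ℓ, m (j + c - ℓ) :=
          Finset.sum_congr rfl e2
        rw [heq2]
        have r2 : ∑ j ∈ Ico i ℓ, m (j + c - ℓ) = ∑ t ∈ Ico (i + c - ℓ) c, m t := by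
          have := Finset.sum_Ico_add' (fun j => m (j + c - ℓ)) (i + c - ℓ) c (ℓ - c)
          rw [(by omega : i + c - ℓ + (ℓ - c) = i), (by omega : c + (ℓ - c) = ℓ)] at this
          rw [← this]
          apply Finset.sum_congr rfl
          intro j hj
          simp only [Finset.mem_Ico] at hj
          congr 1
          omega
        rw [r2]
        set a := i + c - ℓ with ha
        have hstrict := hcstrict a (by omega)
        have hs := hPmono a c (by omega) (by omega)
        have hnat : P c + a + 1 ≤ P a + c := by omega
        omega
  -- Y ≤ G
  have hYG : (∑ i ∈ range ℓ, m ((i + q) % ℓ) * p ^ i) ≤ ∑ i ∈ range (ℓ - 1), p ^ i := by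
    have hterm : ∀ i, m ((i + q) % ℓ) * p ^ i
        = m ((i + q) % ℓ) + m ((i + q) % ℓ) * (∑ k ∈ range i, p ^ k * (p - 1)) := by
      intro i
      have h2 := geom_sum_eq' p (by omega : 1 ≤ p) i
      have h3 : ∑ k ∈ range i, p ^ k * (p - 1) = (∑ k ∈ range i, p ^ k) * (p - 1) :=
        (Finset.sum_mul _ _ _).symm
      rw [h3]
      calc m ((i + q) % ℓ) * p ^ i
          = m ((i + q) % ℓ) * ((∑ k ∈ range i, p ^ k) * (p - 1) + 1) := by rw [h2]
        _ = _ := by ring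
    have hPlrfl : ∑ j ∈ range ℓ, m j = P ℓ := rfl
    calc ∑ i ∈ range ℓ, m ((i + q) % ℓ) * p ^ i
        = ∑ i ∈ range ℓ, (m ((i + q) % ℓ)
            + m ((i + q) % ℓ) * (∑ k ∈ range i, p ^ k * (p - 1))) :=
          Finset.sum_congr rfl fun i _ => hterm i
      _ = (∑ i ∈ range ℓ, m ((i + q) % ℓ))
            + ∑ i ∈ range ℓ, m ((i + q) % ℓ) * (∑ k ∈ range i, p ^ k * (p - 1)) :=
          Finset.sum_add_distrib
      _ = (∑ i ∈ range ℓ, m ((i + q) % ℓ))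
            + ∑ k ∈ range ℓ, (p ^ k * (p - 1)) * (∑ i ∈ Ico (k + 1) ℓ, m ((i + q) % ℓ)) := by
          rw [sum_swap_helper (fun i => m ((i + q) % ℓ)) (fun k => p ^ k * (p - 1)) ℓ]
      _ ≤ (ℓ - 1) + ∑ k ∈ range ℓ, (p ^ k * (p - 1)) * (ℓ - 2 - k) := by
          apply Nat.add_le_add
          · rw [sum_rotate m ℓ q hqlt, hPlrfl]
            omega
          · apply Finset.sum_le_sum
            intro k hk
            simp only [Finset.mem_range] at hk
            by_cases h : k + 1 < ℓ
            · have h8 := hwin (k + 1) (by omega) h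
              exact Nat.mul_le_mul le_rfl (by omega)
            · have h9 : k + 1 = ℓ := by omega
              rw [h9, Finset.Ico_self]
              simp
      _ = ∑ i ∈ range (ℓ - 1), p ^ i := by
          have hsplit : ∀ n : ℕ, ∑ k ∈ range (n + 1), (p ^ k * (p - 1)) * (n + 1 - 2 - k)
              = ∑ k ∈ range n, (n - 1 - k) * (p ^ k * (p - 1)) := by
            intro n
            rw [Finset.sum_range_succ, (show n + 1 - 2 - n = 0 by omega), mul_zero, add_zero]
            exact Finset.sum_congr rfl fun k hk => by
              rw [(show n + 1 - 2 - k = n - 1 - k by omega)]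
              ring
          obtain ⟨n, hn⟩ : ∃ n, ℓ = n + 1 := ⟨ℓ - 1, by omega⟩
          rw [hn, (show n + 1 - 1 = n by omega), hsplit n]
          exact (key_identity p (by omega : 1 ≤ p) n).symm
  -- R ≤ K * Y
  have hRKY : (∑ i ∈ range ℓ, sg ((i + q) % ℓ) * p ^ i)
      ≤ K * ∑ i ∈ range ℓ, m ((i + q) % ℓ) * p ^ i := by
    rw [Finset.mul_sum]
    apply Finset.sum_le_sum
    intro i _
    have hsgm : sg ((i + q) % ℓ) ≤ K * m ((i + q) % ℓ) := by
      rw [hsg, hm]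
      simp only []
      rw [Finset.mul_sum]
      apply Finset.sum_le_sum
      intro d hd
      exact Nat.mul_le_mul (hD d hd) le_rfl
    calc sg ((i + q) % ℓ) * p ^ i ≤ (K * m ((i + q) % ℓ)) * p ^ i :=
          Nat.mul_le_mul hsgm le_rfl
      _ = K * (m ((i + q) % ℓ) * p ^ i) := by ring
  -- K * G < p^ℓ - 1
  have hKG : K * (∑ i ∈ range (ℓ - 1), p ^ i) < p ^ ℓ - 1 := by
    have hp2 : p + 1 ≤ p ^ 2 := by
      calc p + 1 ≤ 2 * p := by omega
        _ ≤ p * p := Nat.mul_le_mul hp le_rfl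
        _ = p ^ 2 := (sq p).symm
    have h1l : 1 ≤ p ^ ℓ := Nat.one_le_pow _ _ (by omega)
    have hgeom := geom_sum_eq' p (by omega : 1 ≤ p) (ℓ - 1)
    have hpow : p ^ ℓ = p ^ (ℓ - 1) * p := by
      rw [← pow_succ]
      congr 1
      omega
    rw [hK]
    zify [h1l, hp2, (show p ≤ p ^ 2 from by omega), (show 1 ≤ p ^ 2 - p from by omega),
      (show 1 ≤ p from by omega)] at hgeom ⊢
    have hpowZ : ((p : ℤ)) ^ ℓ = (p : ℤ) ^ (ℓ - 1) * p := by exact_mod_cast hpow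
    have hKGeq : ((p : ℤ) ^ 2 - p - 1) * (∑ i ∈ range (ℓ - 1), (p : ℤ) ^ i)
        = (p : ℤ) ^ ℓ - p - (∑ i ∈ range (ℓ - 1), (p : ℤ) ^ i) := by
      rw [hpowZ]
      linear_combination (p : ℤ) * hgeom
    have hS0 : (0 : ℤ) ≤ ∑ i ∈ range (ℓ - 1), (p : ℤ) ^ i := by positivity
    have hpz : (2 : ℤ) ≤ (p : ℤ) := by exact_mod_cast hp
    calc ((p : ℤ) ^ 2 - p - 1) * (∑ i ∈ range (ℓ - 1), (p : ℤ) ^ i)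
        = (p : ℤ) ^ ℓ - p - (∑ i ∈ range (ℓ - 1), (p : ℤ) ^ i) := hKGeq
      _ < (p : ℤ) ^ ℓ - 1 := by linarith
  -- divisibility
  have hdvdR : (p ^ ℓ - 1) ∣ ∑ i ∈ range ℓ, sg ((i + q) % ℓ) * p ^ i := by
    have e1 : p ^ q * (∑ i ∈ range ℓ, sg ((i + q) % ℓ) * p ^ i)
        = ∑ i ∈ range ℓ, sg ((i + q) % ℓ) * p ^ (i + q) := by
      rw [Finset.mul_sum]
      apply Finset.sum_congr rfl
      intro i _
      rw [pow_add]
      ring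
    have e2 : (∑ i ∈ range ℓ, sg ((i + q) % ℓ) * p ^ (i + q))
        ≡ ∑ i ∈ range ℓ, sg ((i + q) % ℓ) * p ^ ((i + q) % ℓ) [MOD p ^ ℓ - 1] := by
      apply modEq_sum
      intro i _
      exact (pow_mod_cyc p ℓ (i + q) (by omega)).mul_left _
    have e3 : ∑ i ∈ range ℓ, sg ((i + q) % ℓ) * p ^ ((i + q) % ℓ)
        = ∑ j ∈ range ℓ, sg j * p ^ j := sum_rotate (fun t => sg t * p ^ t) ℓ q hqlt
    have hmod : p ^ q * (∑ i ∈ range ℓ, sg ((i + q) % ℓ) * p ^ i)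
        ≡ 0 [MOD p ^ ℓ - 1] := by
      rw [e1]
      refine e2.trans ?_
      rw [e3, ← hN]
      exact (Nat.modEq_zero_iff_dvd).mpr hdvd
    have h5 : (p ^ ℓ - 1) ∣ p ^ q * (∑ i ∈ range ℓ, sg ((i + q) % ℓ) * p ^ i) :=
      (Nat.modEq_zero_iff_dvd).mp hmod
    have hcop : Nat.Coprime (p ^ ℓ - 1) p := by
      have hd2 : Nat.gcd (p ^ ℓ - 1) p ∣ p ^ ℓ := dvd_pow (Nat.gcd_dvd_right _ _) (by omega)
      have hd1 : Nat.gcd (p ^ ℓ - 1) p ∣ p ^ ℓ - 1 := Nat.gcd_dvd_left _ _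
      have hd3 : Nat.gcd (p ^ ℓ - 1) p ∣ p ^ ℓ - (p ^ ℓ - 1) := Nat.dvd_sub hd2 hd1
      rw [(show p ^ ℓ - (p ^ ℓ - 1) = 1 by omega)] at hd3
      exact Nat.dvd_one.mp hd3
    exact (hcop.pow_right q).dvd_of_dvd_mul_left h5
  -- R > 0
  have hRpos : 0 < ∑ i ∈ range ℓ, sg ((i + q) % ℓ) * p ^ i := by
    rcases Nat.eq_zero_or_pos (∑ i ∈ range ℓ, sg ((i + q) % ℓ) * p ^ i) with h0 | h
    · exfalso
      have hz2 : ∀ i ∈ range ℓ, sg ((i + q) % ℓ) = 0 := by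
        intro i hi
        have h11 := Finset.sum_eq_zero_iff.mp h0 i hi
        rcases Nat.mul_eq_zero.mp h11 with h12 | h12
        · exact h12
        · have h13 : 0 < p ^ i := Nat.pow_pos hppos
          omega
      have hsum0 : ∑ i ∈ range ℓ, sg ((i + q) % ℓ) = 0 := Finset.sum_eq_zero hz2
      rw [sum_rotate sg ℓ q hqlt] at hsum0
      have hN0 : ∑ j ∈ range ℓ, sg j * p ^ j = 0 := by
        apply Finset.sum_eq_zero
        intro j hj
        rw [Finset.sum_eq_zero_iff.mp hsum0 j hj, zero_mul]
      omega
    · exact h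
  have hfin := Nat.le_of_dvd hRpos hdvdR
  have hmono : K * (∑ i ∈ range ℓ, m ((i + q) % ℓ) * p ^ i)
      ≤ K * (∑ i ∈ range (ℓ - 1), p ^ i) := Nat.mul_le_mul le_rfl hYG
  omega


/-- Proposition `densp2`: for an odd prime `p`, the `p`-density of
`D = { i : 1 ≤ i ≤ p² − p − 1, gcd(i,p) = 1 }` equals `1/(p−1)`
(attained as a minimum). -/
theorem stmt_16 (p : ℕ) (hp : p.Prime) (hodd : Odd p) :
    IsLeast (densitySet p ((Finset.Icc 1 (p ^ 2 - p - 1)).filter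
      (fun i => Nat.Coprime i p))) (1 / ((p : ℝ) - 1)) := by
  have hp2 : 2 ≤ p := hp.two_le
  have hpne2 : p ≠ 2 := by
    rintro rfl
    simp [Nat.odd_iff] at hodd
  have hp3 : 3 ≤ p := by omega
  have hsq : p ^ 2 = p * p := sq p
  have h2p : 2 * p ≤ p * p := Nat.mul_le_mul hp2 le_rfl
  set D := (Finset.Icc 1 (p ^ 2 - p - 1)).filter (fun i => Nat.Coprime i p) with hDdef
  have hmem : p - 1 ∈ D := by
    rw [hDdef, Finset.mem_filter, Finset.mem_Icc]
    refine ⟨⟨by omega, by omega⟩, ?_⟩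
    have hd1 : Nat.gcd (p - 1) p ∣ p - 1 := Nat.gcd_dvd_left _ _
    have hd2 : Nat.gcd (p - 1) p ∣ p := Nat.gcd_dvd_right _ _
    have hd3 : Nat.gcd (p - 1) p ∣ p - (p - 1) := Nat.dvd_sub hd2 hd1
    rw [(show p - (p - 1) = 1 by omega)] at hd3
    exact Nat.dvd_one.mp hd3
  constructor
  · -- membership : the density 1/(p-1) is attained at ℓ = 1
    refine ⟨1, (fun d => if d = p - 1 then 1 else 0), Nat.one_pos, ?_, ?_⟩
    · have hsum : ∑ d ∈ D, d * (if d = p - 1 then 1 else 0) = p - 1 := by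
        rw [Finset.sum_eq_single (p - 1)]
        · simp
        · intro b _ hbne
          simp [hbne]
        · intro habs
          exact absurd hmem habs
      refine ⟨?_, ?_, ?_, ?_⟩
      · intro d hd
        have hne : d ≠ p - 1 := fun hdeq => hd (hdeq ▸ hmem)
        simp [hne]
      · intro d
        rw [pow_one]
        show (if d = p - 1 then 1 else 0) ≤ p - 1
        split <;> omega
      · rw [hsum, pow_one]
      · rw [hsum]
        omega
    · have hdig1 : Nat.digits p 1 = [1] := by
        rw [Nat.digits_def' (show 1 < p by omega) Nat.one_pos]
        rw [Nat.mod_eq_of_lt (show 1 < p by omega), Nat.div_eq_of_lt (show 1 < p by omega)]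
        simp
      have hsw : solWeight p D (fun d => if d = p - 1 then 1 else 0) = 1 := by
        unfold solWeight
        rw [Finset.sum_eq_single (p - 1)]
        · simp [hdig1]
        · intro b _ hbne
          simp [hbne]
        · intro habs
          exact absurd hmem habs
      rw [hsw]
      norm_num
  · -- lower bound
    rintro x ⟨ℓ, u, hl, ⟨hsupp, hub, hdvd, hpos⟩, rfl⟩
    have hDle : ∀ d ∈ D, d ≤ p ^ 2 - p - 1 := by
      intro d hd
      rw [hDdef, Finset.mem_filter, Finset.mem_Icc] at hd
      exact hd.1.2
    have hkey : ℓ ≤ solWeight p D u := by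
      unfold solWeight
      exact weight_ge p ℓ hp2 hl D hDle u hub hdvd hpos
    have hp1R : (0 : ℝ) < (p : ℝ) - 1 := by
      have h3R : (3 : ℝ) ≤ (p : ℝ) := by exact_mod_cast hp3
      linarith
    have hlR : (0 : ℝ) < (ℓ : ℝ) := by exact_mod_cast hl
    have hwR : (ℓ : ℝ) ≤ (solWeight p D u : ℝ) := by exact_mod_cast hkey
    rw [div_le_div_iff₀ hp1R (by positivity)]
    nlinarith
end

section
/- Let k be a finite field with q = p^m elements, σ : k → k the Frobenius x ↦ x^p, V a finite-dimensional k-vector space and φ : V → V an additive map satisfying φ(λv) = σ(λ)φ(v). Define V_ss = ⋂_{n≥1} Im(φ^n) and V_nil = ⋃_{n≥1} Ker(φ^n). Then V = V_ss ⊕ V_nil, both subspaces are φ-stable, and the restriction of φ to V_ss is bijective. -/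
open Function LinearMap

/-- The `ZMod p`-module structure on a vector space over a field of characteristic `p`,
wrapped in an opaque definition to keep unification well-behaved. -/
def zmodModuleOfCharP (p : ℕ) (k V : Type*) [Field k] [CharP k p] [AddCommGroup V]
    [Module k V] : Module (ZMod p) V :=
  AddCommGroup.zmodModule fun x => by
    rw [← Nat.cast_smul_eq_nsmul k, CharP.cast_eq_zero k p, zero_smul]

/-- Fitting decomposition for a Frobenius-semilinear endomorphism of a
finite-dimensional vector space over a finite field `k` of characteristic `p`:
`V = V_ss ⊕ V_nil` where `V_ss = ⋂ Im(φ^n)` and `V_nil = ⋃ Ker(φ^n)`; both are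
`k`-subspaces stable under `φ`, and `φ` restricts to a bijection of `V_ss`. -/
theorem stmt_18 (p m : ℕ) (hp : p.Prime) (hm : 0 < m)
    (k : Type*) [Field k] [Fintype k] [CharP k p]
    (hcard : Fintype.card k = p ^ m)
    (V : Type*) [AddCommGroup V] [Module k V] [FiniteDimensional k V]
    (φ : V →+ V) (hφ : ∀ (c : k) (v : V), φ (c • v) = (c ^ p) • φ v) :
    ∃ S T : Submodule k V,
      (S : Set V) = ⋂ n : ℕ, Set.range (⇑φ)^[n + 1] ∧
      (T : Set V) = ⋃ n : ℕ, {v | (⇑φ)^[n + 1] v = 0} ∧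
      IsCompl S T ∧
      (∀ v ∈ S, φ v ∈ S) ∧ (∀ v ∈ T, φ v ∈ T) ∧
      Set.BijOn (⇑φ) (S : Set V) (S : Set V) := by
  classical
  haveI : Fact p.Prime := ⟨hp⟩
  letI : Module (ZMod p) V := zmodModuleOfCharP p k V
  haveI : Finite V := Module.finite_of_finite k
  set ψ : Module.End (ZMod p) V := φ.toZModLinearMap p with hψdef
  have hψpow : ∀ (n : ℕ) (v : V), (ψ ^ n) v = (⇑φ)^[n] v := fun n v => by
    rw [Module.End.pow_apply]; rfl
  have hiter : ∀ (n : ℕ) (c : k) (v : V), (⇑φ)^[n] (c • v) = (c ^ p ^ n) • (⇑φ)^[n] v := by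
    intro n
    induction n with
    | zero => intro c v; simp
    | succ n ih =>
      intro c v
      rw [Function.iterate_succ_apply', ih, hφ, Function.iterate_succ_apply' (⇑φ) n v,
        ← pow_mul, ← pow_succ]
  have hfrob : ∀ (n : ℕ), Function.Surjective (fun x : k => x ^ p ^ n) := by
    intro n
    have h1 : Function.Injective (_root_.iterateFrobenius k p n) :=
      (_root_.iterateFrobenius k p n).injective
    have h2 := Finite.injective_iff_surjective.mp h1
    intro c
    obtain ⟨d, hd⟩ := h2 c
    exact ⟨d, by rwa [_root_.iterateFrobenius_def] at hd⟩
  have hadd : ∀ (n : ℕ) (x y : V), (⇑φ)^[n] (x + y) = (⇑φ)^[n] x + (⇑φ)^[n] y := fun n x y => by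
    rw [← hψpow, ← hψpow, ← hψpow, map_add]
  have hzero : ∀ n : ℕ, (⇑φ)^[n] (0 : V) = 0 := fun n => by rw [← hψpow, map_zero]
  have hker_mono : ∀ {n₁ n₂ : ℕ}, n₁ ≤ n₂ → ∀ {v : V},
      (⇑φ)^[n₁] v = 0 → (⇑φ)^[n₂] v = 0 := by
    intro n₁ n₂ hle v hv
    rw [show n₂ = (n₂ - n₁) + n₁ by omega, Function.iterate_add_apply, hv, hzero]
  let S : Submodule k V :=
    { carrier := ⋂ n : ℕ, Set.range (⇑φ)^[n + 1]
      add_mem' := fun {a b} ha hb => by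
        simp only [Set.mem_iInter, Set.mem_range] at ha hb ⊢
        intro n
        obtain ⟨x, hx⟩ := ha n
        obtain ⟨y, hy⟩ := hb n
        exact ⟨x + y, by rw [hadd, hx, hy]⟩
      zero_mem' := by
        simp only [Set.mem_iInter, Set.mem_range]
        exact fun n => ⟨0, hzero _⟩
      smul_mem' := fun c a ha => by
        simp only [Set.mem_iInter, Set.mem_range] at ha ⊢
        intro n
        obtain ⟨x, hx⟩ := ha n
        obtain ⟨d, hd⟩ := hfrob (n + 1) c
        exact ⟨d • x, by rw [hiter, show d ^ p ^ (n + 1) = c from hd, hx]⟩ }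
  let T : Submodule k V :=
    { carrier := ⋃ n : ℕ, {v | (⇑φ)^[n + 1] v = 0}
      add_mem' := fun {a b} ha hb => by
        simp only [Set.mem_iUnion, Set.mem_setOf_eq] at ha hb ⊢
        obtain ⟨na, hna⟩ := ha
        obtain ⟨nb, hnb⟩ := hb
        refine ⟨max na nb, ?_⟩
        rw [hadd, hker_mono (by omega : na + 1 ≤ max na nb + 1) hna,
          hker_mono (by omega : nb + 1 ≤ max na nb + 1) hnb, add_zero]
      zero_mem' := by
        simp only [Set.mem_iUnion, Set.mem_setOf_eq]
        exact ⟨0, hzero _⟩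
      smul_mem' := fun c a ha => by
        simp only [Set.mem_iUnion, Set.mem_setOf_eq] at ha ⊢
        obtain ⟨n, hn⟩ := ha
        exact ⟨n, by rw [hiter, hn, smul_zero]⟩ }
  have hmemS : ∀ x : V, x ∈ S ↔ x ∈ ⋂ n : ℕ, Set.range (⇑φ)^[n + 1] := fun x => Iff.rfl
  have hmemT : ∀ x : V, x ∈ T ↔ x ∈ ⋃ n : ℕ, {v | (⇑φ)^[n + 1] v = 0} := fun x => Iff.rfl
  -- identify the carriers with the ZMod p Fitting submodules
  have hSset : (S : Set V) = ↑(⨅ n : ℕ, LinearMap.range (ψ ^ n)) := by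
    rw [Submodule.coe_iInf]
    apply Set.Subset.antisymm
    · intro x hx
      have hx' : ∀ i : ℕ, x ∈ Set.range (⇑φ)^[i + 1] := Set.mem_iInter.mp hx
      refine Set.mem_iInter.mpr fun n => ?_
      match n with
      | 0 =>
        exact SetLike.mem_coe.mpr (LinearMap.mem_range.mpr ⟨x, by rw [pow_zero]; rfl⟩)
      | (n + 1) =>
        obtain ⟨w, hw⟩ := hx' n
        exact SetLike.mem_coe.mpr (LinearMap.mem_range.mpr ⟨w, by rw [hψpow]; exact hw⟩)
    · intro x hx
      have hx' : ∀ i : ℕ, x ∈ (LinearMap.range (ψ ^ i) : Set V) := Set.mem_iInter.mp hx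
      refine Set.mem_iInter.mpr fun n => ?_
      obtain ⟨w, hw⟩ := LinearMap.mem_range.mp (SetLike.mem_coe.mp (hx' (n + 1)))
      exact ⟨w, by rw [← hψpow]; exact hw⟩
  have hTset : (T : Set V) = ↑(⨆ n : ℕ, LinearMap.ker (ψ ^ n)) := by
    have hchain : (↑(⨆ n : ℕ, LinearMap.ker (ψ ^ n)) : Set V)
        = ⋃ n : ℕ, ↑(LinearMap.ker (ψ ^ n)) := Submodule.coe_iSup_of_chain ψ.iterateKer
    rw [hchain]
    apply Set.Subset.antisymm
    · intro x hx
      obtain ⟨n, hn⟩ := Set.mem_iUnion.mp hx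
      refine Set.mem_iUnion.mpr ⟨n + 1, ?_⟩
      exact SetLike.mem_coe.mpr (LinearMap.mem_ker.mpr (by rw [hψpow]; exact hn))
    · intro x hx
      obtain ⟨n, hn⟩ := Set.mem_iUnion.mp hx
      have hn' : (⇑φ)^[n] x = 0 := by
        rw [← hψpow]; exact LinearMap.mem_ker.mp (SetLike.mem_coe.mp hn)
      exact Set.mem_iUnion.mpr ⟨n, hker_mono (Nat.le_succ n) hn'⟩
  have hcompl0 := LinearMap.isCompl_iSup_ker_pow_iInf_range_pow ψ
  have hdisj : Disjoint S T := by
    rw [Submodule.disjoint_def]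
    intro x hxS hxT
    have hx1 : x ∈ ⨅ n : ℕ, LinearMap.range (ψ ^ n) := by
      have h : x ∈ (S : Set V) := hxS
      rw [hSset] at h; exact h
    have hx2 : x ∈ ⨆ n : ℕ, LinearMap.ker (ψ ^ n) := by
      have h : x ∈ (T : Set V) := hxT
      rw [hTset] at h; exact h
    exact Submodule.disjoint_def.mp hcompl0.disjoint x hx2 hx1
  have hcodis : Codisjoint S T := by
    rw [codisjoint_iff, eq_top_iff]
    intro x _
    have hx : x ∈ (⨆ n : ℕ, LinearMap.ker (ψ ^ n)) ⊔ (⨅ n : ℕ, LinearMap.range (ψ ^ n)) := by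
      rw [codisjoint_iff.mp hcompl0.codisjoint]; trivial
    obtain ⟨a, ha, b, hb, rfl⟩ := Submodule.mem_sup.mp hx
    have hbS : b ∈ S := by
      rw [← SetLike.mem_coe, hSset]; exact hb
    have haT : a ∈ T := by
      rw [← SetLike.mem_coe, hTset]; exact ha
    exact Submodule.mem_sup.mpr ⟨b, hbS, a, haT, by rw [add_comm]⟩
  have hSstab : ∀ v ∈ S, φ v ∈ S := by
    intro v hv
    rw [hmemS] at hv ⊢
    refine Set.mem_iInter.mpr fun n => ?_
    obtain ⟨w, hw⟩ := Set.mem_iInter.mp hv n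
    exact ⟨φ w, by rw [← Function.iterate_succ_apply, Function.iterate_succ_apply', hw]⟩
  have hTstab : ∀ v ∈ T, φ v ∈ T := by
    intro v hv
    rw [hmemT] at hv ⊢
    obtain ⟨n, hn⟩ := Set.mem_iUnion.mp hv
    exact Set.mem_iUnion.mpr
      ⟨n, by rw [Set.mem_setOf_eq, ← Function.iterate_succ_apply, Function.iterate_succ_apply',
        hn, map_zero]⟩
  obtain ⟨N, hN⟩ := Filter.eventually_atTop.mp ψ.eventually_iInf_range_pow_eq
  refine ⟨S, T, rfl, rfl, ⟨hdisj, hcodis⟩, hSstab, hTstab, ?_, ?_, ?_⟩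
  · exact fun v hv => hSstab v hv
  · intro a ha b hb hab
    have hsub : a - b ∈ S := S.sub_mem ha hb
    have hsubT : a - b ∈ T := by
      rw [hmemT]
      refine Set.mem_iUnion.mpr ⟨0, ?_⟩
      show (⇑φ)^[0 + 1] (a - b) = 0
      rw [zero_add, Function.iterate_one, map_sub, hab, sub_self]
    have := Submodule.disjoint_def.mp hdisj _ hsub hsubT
    exact sub_eq_zero.mp this
  · intro s hs
    have hs' : s ∈ LinearMap.range (ψ ^ (N + 1)) := by
      rw [← hN (N + 1) (Nat.le_succ N), ← SetLike.mem_coe, ← hSset]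
      exact hs
    obtain ⟨w, hw⟩ := hs'
    refine ⟨(⇑φ)^[N] w, ?_, ?_⟩
    · have h1 : (ψ ^ N) w ∈ ⨅ n : ℕ, LinearMap.range (ψ ^ n) := by
        rw [hN N le_rfl]; exact ⟨w, rfl⟩
      have h2 : (ψ ^ N) w ∈ (S : Set V) := by rw [hSset]; exact h1
      rwa [hψpow] at h2
    · rw [← Function.iterate_succ_apply' (⇑φ) N w, ← hψpow]
      exact hw
end
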